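/- arXiv:1207.2508 — 4 statements merged into one kernel-verified Lean document; each statement's English description precedes it below -/
import Mathlib

section
/- Let α be irrational and let (N_i) be a strictly increasing sequence of integers such that each N_i + 1 is a closest return time (i.e. (N_i + 1)α ∈ [−a_{N_i}, b_{N_i}] mod 1) and, for every i, either a_{N_i} < b_{N_i} and r_{N_i} ≤ 2 s_{N_i}, or a_{N_i} > b_{N_i} and s_{N_i} ≤ 2 r_{N_i}. Then for every i: either a_{N_i} < b_{N_i} and ⌊r_{N_i}/4⌋ − 1 ≤ w(N_i), or a_{N_i} > b_{N_i} and ⌊s_{N_i}/4⌋ − 1 ≤ w(N_i), where ⌊·⌋ denotes the integer part. -/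
open Set Filter

/-- `inArc a w b` : the point `w` (mod 1) lies strictly inside the positively oriented
open arc of the circle `ℝ/ℤ` from `a` (mod 1) to `b` (mod 1). -/
def inArc (a w b : ℝ) : Prop :=
  0 < Int.fract (w - a) ∧ Int.fract (w - a) < Int.fract (b - a)

/-- `bseq α n = b_n` : the distance from `0` to the nearest point of the orbit segment
`{α, 2α, …, nα}` on its right, i.e. the least fractional part `{kα}`, `1 ≤ k ≤ n`. -/
noncomputable def bseq (α : ℝ) (n : ℕ) : ℝ :=
  sInf {t : ℝ | ∃ k : ℕ, 1 ≤ k ∧ k ≤ n ∧ t = Int.fract ((k : ℝ) * α)}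

/-- `aseq α n = a_n` : the distance from `0` to the nearest point of the orbit segment
`{α, 2α, …, nα}` on its left, i.e. `1` minus the largest fractional part `{kα}`, `1 ≤ k ≤ n`. -/
noncomputable def aseq (α : ℝ) (n : ℕ) : ℝ :=
  1 - sSup {t : ℝ | ∃ k : ℕ, 1 ≤ k ∧ k ≤ n ∧ t = Int.fract ((k : ℝ) * α)}

/-- `r` is the index `r_n ∈ {1,…,n}` with `r_n α = -a_n` (mod 1). -/
def IsRIndex (α : ℝ) (n r : ℕ) : Prop :=
  1 ≤ r ∧ r ≤ n ∧ Int.fract ((r : ℝ) * α) = 1 - aseq α n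

/-- `s` is the index `s_n ∈ {1,…,n}` with `s_n α = b_n` (mod 1). -/
def IsSIndex (α : ℝ) (n s : ℕ) : Prop :=
  1 ≤ s ∧ s ≤ n ∧ Int.fract ((s : ℝ) * α) = bseq α n

/-- `n + 1` is a closest return time: `(n+1)α ∈ [-a_n, b_n]` (mod 1). -/
def IsClosestReturn (α : ℝ) (n : ℕ) : Prop :=
  Int.fract (((n : ℝ) + 1) * α) ≤ bseq α n ∨ 1 - aseq α n ≤ Int.fract (((n : ℝ) + 1) * α)

/-- The set of reals lying (mod 1) in the positively oriented open arc from `u` to `v`. -/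
def arcSet (u v : ℝ) : Set ℝ := {z : ℝ | inArc u z v}

/-- The intervals `I_n, R_α(I_n), …, R_α^w(I_n), R_α^{-w}(J_n), …, J_n` are pairwise
disjoint, where `I_n = (r α, s α)` and `J_n = ((n-s)α, (n-r)α)` (mod 1). -/
def WanderDisjoint (α : ℝ) (n r s : ℕ) (w : ℤ) : Prop :=
  ∀ k l : ℤ, 0 ≤ k → k ≤ w → 0 ≤ l → l ≤ w →
    (k ≠ l → Disjoint (arcSet (((r : ℝ) + k) * α) (((s : ℝ) + k) * α))
      (arcSet (((r : ℝ) + l) * α) (((s : ℝ) + l) * α))) ∧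
    (k ≠ l → Disjoint (arcSet (((n : ℝ) - s - k) * α) (((n : ℝ) - r - k) * α))
      (arcSet (((n : ℝ) - s - l) * α) (((n : ℝ) - r - l) * α))) ∧
    Disjoint (arcSet (((r : ℝ) + k) * α) (((s : ℝ) + k) * α))
      (arcSet (((n : ℝ) - s - l) * α) (((n : ℝ) - r - l) * α))

/-- `w` is the *wandering time* `w(n)` : the largest integer `w` such that the intervals
`I_n, R_α(I_n), …, R_α^w(I_n), R_α^{-w}(J_n), …, J_n` are pairwise disjoint. -/
def IsWanderingTime (α : ℝ) (n r s : ℕ) (w : ℤ) : Prop :=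
  WanderDisjoint α n r s w ∧ ∀ w' : ℤ, WanderDisjoint α n r s w' → w' ≤ w


lemma myfract_of_neg {x : ℝ} (h1 : -1 ≤ x) (h2 : x < 0) : Int.fract x = x + 1 := by
  rw [← Int.fract_add_one x]
  exact Int.fract_eq_self.mpr ⟨by linarith, by linarith⟩

lemma myfract_of_ge1 {x : ℝ} (h1 : 1 ≤ x) (h2 : x < 2) : Int.fract x = x - 1 := by
  have : Int.fract (x - 1 + 1) = Int.fract (x - 1) := Int.fract_add_one _
  simp only [sub_add_cancel] at this
  rw [this]
  exact Int.fract_eq_self.mpr ⟨by linarith, by linarith⟩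

lemma myfract_sub_fract (x y : ℝ) : Int.fract (x - y) = Int.fract (Int.fract x - Int.fract y) := by
  rw [Int.fract_eq_fract]
  exact ⟨⌊x⌋ - ⌊y⌋, by push_cast; simp only [Int.fract]; ring⟩

lemma myfract_add_fract (x y : ℝ) : Int.fract (x + y) = Int.fract (Int.fract x + Int.fract y) := by
  rw [Int.fract_eq_fract]
  exact ⟨⌊x⌋ + ⌊y⌋, by push_cast; simp only [Int.fract]; ring⟩

lemma myfract_ne_zero (α : ℝ) (hα : Irrational α) (c : ℤ) (hc : c ≠ 0) :
    Int.fract ((c : ℝ) * α) ≠ 0 := by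
  intro h
  have h2 : ((c : ℝ)) * α = (⌊(c : ℝ) * α⌋ : ℝ) := by
    have := Int.self_sub_fract ((c : ℝ) * α); rw [h] at this; linarith
  exact (hα.intCast_mul hc).ne_int _ h2

lemma myfract_inj (α : ℝ) (hα : Irrational α) (c d : ℤ)
    (h : Int.fract ((c : ℝ) * α) = Int.fract ((d : ℝ) * α)) : c = d := by
  by_contra hne
  apply myfract_ne_zero α hα (c - d) (sub_ne_zero.2 hne)
  have e : ((c - d : ℤ) : ℝ) * α = (c : ℝ) * α - (d : ℝ) * α := by push_cast; ring
  rw [e, myfract_sub_fract, h, sub_self, Int.fract_zero]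

lemma arc_disjoint {u v u' v' L : ℝ} (hL : 0 < L)
    (h1 : Int.fract (v - u) = L) (h2 : Int.fract (v' - u') = L)
    (h3 : L ≤ Int.fract (u' - u)) (h4 : Int.fract (u' - u) ≤ 1 - L) :
    Disjoint (arcSet u v) (arcSet u' v') := by
  rw [Set.disjoint_left]
  rintro z ⟨hz1, hz2⟩ ⟨hz3, hz4⟩
  rw [h1] at hz2; rw [h2] at hz4
  have e : z - u' = (z - u) - (u' - u) := by ring
  have key : Int.fract (z - u') = Int.fract (z - u) - Int.fract (u' - u) + 1 := by
    rw [e, myfract_sub_fract]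
    exact myfract_of_neg (by linarith) (by linarith)
  linarith

lemma main_case (α : ℝ) (hα : Irrational α) (n r s : ℕ)
    (hr : IsRIndex α n r) (hs : IsSIndex α n s)
    (hcr : IsClosestReturn α n) (hab : aseq α n < bseq α n) (hrs : r ≤ 2 * s) :
    WanderDisjoint α n r s ((r : ℤ) / 4 - 1) := by
  obtain ⟨hr1, hrn, hrα⟩ := hr
  obtain ⟨hs1, hsn, hsα⟩ := hs
  by_cases hr4 : r ≤ 3
  · intro k l hk hkw hl hlw
    exfalso
    have : (r : ℤ) ≤ 3 := by exact_mod_cast hr4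
    omega
  push_neg at hr4
  have hr4' : 4 ≤ r := hr4
  set a := aseq α n with ha_def
  set b := bseq α n with hb_def
  -- min and max facts
  have hmin : ∀ k : ℕ, 1 ≤ k → k ≤ n → b ≤ Int.fract ((k : ℝ) * α) := by
    intro k h1 h2
    apply csInf_le
    · exact ⟨0, by rintro t ⟨j, _, _, rfl⟩; exact Int.fract_nonneg _⟩
    · exact ⟨k, h1, h2, rfl⟩
  have hmax : ∀ k : ℕ, 1 ≤ k → k ≤ n → Int.fract ((k : ℝ) * α) ≤ 1 - a := by
    intro k h1 h2
    have h3 : Int.fract ((k : ℝ) * α) ≤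
        sSup {t : ℝ | ∃ k : ℕ, 1 ≤ k ∧ k ≤ n ∧ t = Int.fract ((k : ℝ) * α)} := by
      apply le_csSup
      · exact ⟨1, by rintro t ⟨j, _, _, rfl⟩; exact (Int.fract_lt_one _).le⟩
      · exact ⟨k, h1, h2, rfl⟩
    have : a = 1 - sSup {t : ℝ | ∃ k : ℕ, 1 ≤ k ∧ k ≤ n ∧ t = Int.fract ((k : ℝ) * α)} := rfl
    linarith
  have hinj : ∀ c d : ℕ, Int.fract ((c : ℝ) * α) = Int.fract ((d : ℝ) * α) → c = d := by
    intro c d h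
    have : (c : ℤ) = (d : ℤ) := by
      apply myfract_inj α hα
      push_cast
      exact h
    exact_mod_cast this
  have hfne : ∀ c : ℕ, 1 ≤ c → Int.fract ((c : ℝ) * α) ≠ 0 := by
    intro c hc h
    apply myfract_ne_zero α hα (c : ℤ) (by exact_mod_cast Nat.one_le_iff_ne_zero.mp hc)
    push_cast
    exact h
  have hb0 : 0 < b := by
    have h1 : 0 ≤ Int.fract ((s : ℝ) * α) := Int.fract_nonneg _
    have h2 := hfne s hs1
    rw [hsα] at h1 h2
    exact lt_of_le_of_ne h1 (Ne.symm h2)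
  have ha0 : 0 < a := by
    have := Int.fract_lt_one ((r : ℝ) * α)
    rw [hrα] at this
    linarith
  have hn2 : 2 ≤ n := by omega
  have hab1 : a + b < 1 := by
    have h1 := hmin 1 (by omega) (by omega)
    have h2 := hmin 2 (by omega) hn2
    have h3 := hmax 1 (by omega) (by omega)
    have h4 := hmax 2 (by omega) hn2
    have h5 : Int.fract ((1 : ℕ) * α) ≠ Int.fract (((2 : ℕ) : ℝ) * α) := by
      intro h; exact absurd (hinj 1 2 h) (by omega)
    rcases lt_or_gt_of_ne h5 with h | h
    · push_cast at h2 h3 ⊢; linarith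
    · push_cast at h1 h4 ⊢; linarith
  -- n + 1 = r + s
  have hnrs : n + 1 = r + s := by
    have hge : n < r + s := by
      by_contra h
      push_neg at h
      have h1 := hmin (r + s) (by omega) h
      have h2 : Int.fract (((r + s : ℕ) : ℝ) * α) = b - a := by
        have e : ((r + s : ℕ) : ℝ) * α = (r : ℝ) * α + (s : ℝ) * α := by push_cast; ring
        rw [e, myfract_add_fract, hrα, hsα]
        have e2 : 1 - a + b = (b - a) + 1 := by ring
        rw [e2, Int.fract_add_one]
        exact Int.fract_eq_self.mpr ⟨by linarith, by linarith⟩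
      rw [h2] at h1
      linarith
    have hle : r + s ≤ n + 1 := by
      by_contra h
      push_neg at h
      have hF0 : 0 ≤ Int.fract (((n : ℝ) + 1) * α) := Int.fract_nonneg _
      have hF1 : Int.fract (((n : ℝ) + 1) * α) < 1 := Int.fract_lt_one _
      have hcast : ((n : ℝ) + 1) = ((n + 1 : ℕ) : ℝ) := by push_cast; ring
      rcases hcr with hc | hc
      · -- fract((n+1)α) ≤ b
        have hne : Int.fract (((n : ℝ) + 1) * α) ≠ b := by
          intro he
          have : n + 1 = s := hinj (n + 1) s (by rw [← hcast, he, hsα])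
          omega
        have hc' : Int.fract (((n : ℝ) + 1) * α) < b := lt_of_le_of_ne hc hne
        have hd1 : 1 ≤ n + 1 - s := by omega
        have hd2 : n + 1 - s ≤ n := by omega
        have hdv : Int.fract (((n + 1 - s : ℕ) : ℝ) * α) =
            Int.fract (((n : ℝ) + 1) * α) - b + 1 := by
          have e : ((n + 1 - s : ℕ) : ℝ) * α = ((n : ℝ) + 1) * α - (s : ℝ) * α := by
            rw [Nat.cast_sub (by omega)]; push_cast; ring
          rw [e, myfract_sub_fract, hsα]
          exact myfract_of_neg (by linarith) (by linarith)
        have hdmax := hmax (n + 1 - s) hd1 hd2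
        have hdne : Int.fract (((n + 1 - s : ℕ) : ℝ) * α) ≠ 1 - a := by
          intro he
          have : n + 1 - s = r := hinj (n + 1 - s) r (by rw [he, hrα])
          omega
        have hdlt : Int.fract (((n + 1 - s : ℕ) : ℝ) * α) < 1 - a :=
          lt_of_le_of_ne hdmax hdne
        have hd'1 : 1 ≤ r - (n + 1 - s) := by omega
        have hd'2 : r - (n + 1 - s) ≤ n := by omega
        have hFpos : 0 < Int.fract (((n : ℝ) + 1) * α) := by
          refine lt_of_le_of_ne hF0 (Ne.symm ?_)
          rw [hcast]
          exact hfne (n + 1) (by omega)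
        have hdgt : 1 - b < Int.fract (((n + 1 - s : ℕ) : ℝ) * α) := by
          rw [hdv]; linarith
        have hd'v : Int.fract (((r - (n + 1 - s) : ℕ) : ℝ) * α) =
            (1 - a) - Int.fract (((n + 1 - s : ℕ) : ℝ) * α) := by
          have e : ((r - (n + 1 - s) : ℕ) : ℝ) * α =
              (r : ℝ) * α - ((n + 1 - s : ℕ) : ℝ) * α := by
            rw [Nat.cast_sub (by omega)]; push_cast; ring
          rw [e, myfract_sub_fract, hrα]
          exact Int.fract_eq_self.mpr ⟨by linarith,
            by linarith [Int.fract_nonneg (((n + 1 - s : ℕ) : ℝ) * α)]⟩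
        have := hmin (r - (n + 1 - s)) hd'1 hd'2
        rw [hd'v] at this
        linarith
      · -- 1 - a ≤ fract((n+1)α)
        have hne : Int.fract (((n : ℝ) + 1) * α) ≠ 1 - a := by
          intro he
          have : n + 1 = r := hinj (n + 1) r (by rw [← hcast, he, hrα])
          omega
        have hc' : 1 - a < Int.fract (((n : ℝ) + 1) * α) := lt_of_le_of_ne hc (Ne.symm hne)
        have hd1 : 1 ≤ n + 1 - r := by omega
        have hd2 : n + 1 - r ≤ n := by omega
        have hdv : Int.fract (((n + 1 - r : ℕ) : ℝ) * α) =
            Int.fract (((n : ℝ) + 1) * α) - (1 - a) := by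
          have e : ((n + 1 - r : ℕ) : ℝ) * α = ((n : ℝ) + 1) * α - (r : ℝ) * α := by
            rw [Nat.cast_sub (by omega)]; push_cast; ring
          rw [e, myfract_sub_fract, hrα]
          exact Int.fract_eq_self.mpr ⟨by linarith, by linarith⟩
        have := hmin (n + 1 - r) hd1 hd2
        rw [hdv] at this
        linarith
    omega
  -- key bounds on fract(mα)
  have key : ∀ m : ℕ, 1 ≤ m → m < s → m + s ≤ n →
      a + b ≤ Int.fract ((m : ℝ) * α) ∧ Int.fract ((m : ℝ) * α) ≤ 1 - (a + b) := by
    intro m h1 h2 h3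
    have hFmin := hmin m h1 (by omega)
    have hFmax := hmax m h1 (by omega)
    have hF0 : 0 ≤ Int.fract ((m : ℝ) * α) := Int.fract_nonneg _
    have hF1 : Int.fract ((m : ℝ) * α) < 1 := Int.fract_lt_one _
    constructor
    · by_contra h
      push_neg at h
      have hne : Int.fract ((m : ℝ) * α) ≠ b := by
        intro he
        have : m = s := hinj m s (by rw [he, hsα])
        omega
      have hgt : b < Int.fract ((m : ℝ) * α) := lt_of_le_of_ne hFmin (Ne.symm hne)
      have hdv : Int.fract (((s - m : ℕ) : ℝ) * α) = b - Int.fract ((m : ℝ) * α) + 1 := by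
        have e : ((s - m : ℕ) : ℝ) * α = (s : ℝ) * α - (m : ℝ) * α := by
          rw [Nat.cast_sub (by omega)]; push_cast; ring
        rw [e, myfract_sub_fract, hsα]
        exact myfract_of_neg (by linarith) (by linarith)
      have := hmax (s - m) (by omega) (by omega)
      rw [hdv] at this
      linarith
    · by_contra h
      push_neg at h
      have hdv : Int.fract (((m + s : ℕ) : ℝ) * α) =
          Int.fract (Int.fract ((m : ℝ) * α) + b) := by
        have e : ((m + s : ℕ) : ℝ) * α = (m : ℝ) * α + (s : ℝ) * α := by push_cast; ring
        rw [e, myfract_add_fract, hsα]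
      rcases lt_or_ge (Int.fract ((m : ℝ) * α) + b) 1 with hlt | hge
      · have h2' : Int.fract (((m + s : ℕ) : ℝ) * α) = Int.fract ((m : ℝ) * α) + b := by
          rw [hdv]; exact Int.fract_eq_self.mpr ⟨by linarith, hlt⟩
        have := hmax (m + s) (by omega) h3
        rw [h2'] at this
        linarith
      · have h2' : Int.fract (((m + s : ℕ) : ℝ) * α) = Int.fract ((m : ℝ) * α) + b - 1 := by
          rw [hdv]; exact myfract_of_ge1 hge (by linarith)
        have := hmin (m + s) (by omega) h3
        rw [h2'] at this
        linarith
  -- bounds for integer multiples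
  have hgood : ∀ c : ℤ, c ≠ 0 → -(2 * ((r : ℤ) / 4 - 1) + 1) ≤ c → c ≤ 2 * ((r : ℤ) / 4 - 1) + 1 →
      a + b ≤ Int.fract ((c : ℝ) * α) ∧ Int.fract ((c : ℝ) * α) ≤ 1 - (a + b) := by
    have hrz : (r : ℤ) ≤ 2 * (s : ℤ) := by exact_mod_cast hrs
    have hnz : (n : ℤ) + 1 = (r : ℤ) + (s : ℤ) := by exact_mod_cast hnrs
    have hrz4 : (4 : ℤ) ≤ (r : ℤ) := by exact_mod_cast hr4'
    have base : ∀ c : ℤ, 1 ≤ c → c ≤ 2 * ((r : ℤ) / 4 - 1) + 1 →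
        a + b ≤ Int.fract ((c : ℝ) * α) ∧ Int.fract ((c : ℝ) * α) ≤ 1 - (a + b) := by
      intro c h1 h2
      have hm := key c.toNat (by omega) (by omega) (by omega)
      have e : ((c.toNat : ℕ) : ℝ) = (c : ℝ) := by
        exact_mod_cast congrArg (Int.cast : ℤ → ℝ) (Int.toNat_of_nonneg (by omega))
      rwa [e] at hm
    intro c hc0 hcl hcu
    rcases lt_or_gt_of_ne hc0 with hneg | hpos
    · have hb := base (-c) (by omega) (by omega)
      have hne : Int.fract (((-c : ℤ) : ℝ) * α) ≠ 0 := myfract_ne_zero α hα (-c) (by omega)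
      have e : (c : ℝ) * α = -(((-c : ℤ) : ℝ) * α) := by push_cast; ring
      rw [e, Int.fract_neg hne]
      constructor <;> [linarith [hb.2]; linarith [hb.1]]
    · exact base c hpos hcu
  -- arc length
  have hL : Int.fract ((s : ℝ) * α - (r : ℝ) * α) = a + b := by
    rw [myfract_sub_fract, hsα, hrα]
    have e : b - (1 - a) = (a + b) - 1 := by ring
    have e2 : Int.fract (a + b - 1) = (a + b - 1) + 1 :=
      myfract_of_neg (by linarith) (by linarith)
    rw [e, e2]
    ring
  have hLpos : 0 < a + b := by linarith
  have hnR : (n : ℝ) = (r : ℝ) + (s : ℝ) - 1 := by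
    have : ((n : ℕ) : ℝ) + 1 = ((r : ℕ) : ℝ) + (s : ℕ) := by exact_mod_cast congrArg (Nat.cast : ℕ → ℝ) hnrs
    linarith
  -- final
  intro k l hk hkw hl hlw
  refine ⟨?_, ?_, ?_⟩
  · intro hkl
    apply arc_disjoint hLpos
    · have e : ((s : ℝ) + k) * α - ((r : ℝ) + k) * α = (s : ℝ) * α - (r : ℝ) * α := by ring
      rw [e]; exact hL
    · have e : ((s : ℝ) + l) * α - ((r : ℝ) + l) * α = (s : ℝ) * α - (r : ℝ) * α := by ring
      rw [e]; exact hL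
    all_goals {
      have e : ((r : ℝ) + l) * α - ((r : ℝ) + k) * α = ((l - k : ℤ) : ℝ) * α := by
        push_cast; ring
      rw [e]
      first
      | exact (hgood (l - k) (by omega) (by omega) (by omega)).1
      | exact (hgood (l - k) (by omega) (by omega) (by omega)).2 }
  · intro hkl
    apply arc_disjoint hLpos
    · have e : ((n : ℝ) - r - k) * α - ((n : ℝ) - s - k) * α = (s : ℝ) * α - (r : ℝ) * α := by ring
      rw [e]; exact hL
    · have e : ((n : ℝ) - r - l) * α - ((n : ℝ) - s - l) * α = (s : ℝ) * α - (r : ℝ) * α := by ring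
      rw [e]; exact hL
    all_goals {
      have e : ((n : ℝ) - s - l) * α - ((n : ℝ) - s - k) * α = ((k - l : ℤ) : ℝ) * α := by
        push_cast; ring
      rw [e]
      first
      | exact (hgood (k - l) (by omega) (by omega) (by omega)).1
      | exact (hgood (k - l) (by omega) (by omega) (by omega)).2 }
  · apply arc_disjoint hLpos
    · have e : ((s : ℝ) + k) * α - ((r : ℝ) + k) * α = (s : ℝ) * α - (r : ℝ) * α := by ring
      rw [e]; exact hL
    · have e : ((n : ℝ) - r - l) * α - ((n : ℝ) - s - l) * α = (s : ℝ) * α - (r : ℝ) * α := by ring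
      rw [e]; exact hL
    all_goals {
      have e : ((n : ℝ) - s - l) * α - ((r : ℝ) + k) * α = ((-(1 + k + l) : ℤ) : ℝ) * α := by
        push_cast; rw [hnR]; ring
      rw [e]
      first
      | exact (hgood (-(1 + k + l)) (by omega) (by omega) (by omega)).1
      | exact (hgood (-(1 + k + l)) (by omega) (by omega) (by omega)).2 }

lemma main_case' (α : ℝ) (hα : Irrational α) (n r s : ℕ)
    (hr : IsRIndex α n r) (hs : IsSIndex α n s)
    (hcr : IsClosestReturn α n) (hba : bseq α n < aseq α n) (hsr : s ≤ 2 * r) :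
    WanderDisjoint α n r s ((s : ℤ) / 4 - 1) := by
  obtain ⟨hr1, hrn, hrα⟩ := hr
  obtain ⟨hs1, hsn, hsα⟩ := hs
  by_cases hs4 : s ≤ 3
  · intro k l hk hkw hl hlw
    exfalso
    have : (s : ℤ) ≤ 3 := by exact_mod_cast hs4
    omega
  push_neg at hs4
  have hs4' : 4 ≤ s := hs4
  set a := aseq α n with ha_def
  set b := bseq α n with hb_def
  have hmin : ∀ k : ℕ, 1 ≤ k → k ≤ n → b ≤ Int.fract ((k : ℝ) * α) := by
    intro k h1 h2
    apply csInf_le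
    · exact ⟨0, by rintro t ⟨j, _, _, rfl⟩; exact Int.fract_nonneg _⟩
    · exact ⟨k, h1, h2, rfl⟩
  have hmax : ∀ k : ℕ, 1 ≤ k → k ≤ n → Int.fract ((k : ℝ) * α) ≤ 1 - a := by
    intro k h1 h2
    have h3 : Int.fract ((k : ℝ) * α) ≤
        sSup {t : ℝ | ∃ k : ℕ, 1 ≤ k ∧ k ≤ n ∧ t = Int.fract ((k : ℝ) * α)} := by
      apply le_csSup
      · exact ⟨1, by rintro t ⟨j, _, _, rfl⟩; exact (Int.fract_lt_one _).le⟩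
      · exact ⟨k, h1, h2, rfl⟩
    have : a = 1 - sSup {t : ℝ | ∃ k : ℕ, 1 ≤ k ∧ k ≤ n ∧ t = Int.fract ((k : ℝ) * α)} := rfl
    linarith
  have hinj : ∀ c d : ℕ, Int.fract ((c : ℝ) * α) = Int.fract ((d : ℝ) * α) → c = d := by
    intro c d h
    have : (c : ℤ) = (d : ℤ) := by
      apply myfract_inj α hα
      push_cast
      exact h
    exact_mod_cast this
  have hfne : ∀ c : ℕ, 1 ≤ c → Int.fract ((c : ℝ) * α) ≠ 0 := by
    intro c hc h
    apply myfract_ne_zero α hα (c : ℤ) (by exact_mod_cast Nat.one_le_iff_ne_zero.mp hc)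
    push_cast
    exact h
  have hb0 : 0 < b := by
    have h1 : 0 ≤ Int.fract ((s : ℝ) * α) := Int.fract_nonneg _
    have h2 := hfne s hs1
    rw [hsα] at h1 h2
    exact lt_of_le_of_ne h1 (Ne.symm h2)
  have ha0 : 0 < a := by
    have := Int.fract_lt_one ((r : ℝ) * α)
    rw [hrα] at this
    linarith
  have hn2 : 2 ≤ n := by omega
  have hab1 : a + b < 1 := by
    have h1 := hmin 1 (by omega) (by omega)
    have h2 := hmin 2 (by omega) hn2
    have h3 := hmax 1 (by omega) (by omega)
    have h4 := hmax 2 (by omega) hn2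
    have h5 : Int.fract ((1 : ℕ) * α) ≠ Int.fract (((2 : ℕ) : ℝ) * α) := by
      intro h; exact absurd (hinj 1 2 h) (by omega)
    rcases lt_or_gt_of_ne h5 with h | h
    · push_cast at h2 h3 ⊢; linarith
    · push_cast at h1 h4 ⊢; linarith
  -- n + 1 = r + s
  have hnrs : n + 1 = r + s := by
    have hge : n < r + s := by
      by_contra h
      push_neg at h
      have h1 := hmax (r + s) (by omega) h
      have h2 : Int.fract (((r + s : ℕ) : ℝ) * α) = 1 - a + b := by
        have e : ((r + s : ℕ) : ℝ) * α = (r : ℝ) * α + (s : ℝ) * α := by push_cast; ring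
        rw [e, myfract_add_fract, hrα, hsα]
        exact Int.fract_eq_self.mpr ⟨by linarith, by linarith⟩
      rw [h2] at h1
      linarith
    have hle : r + s ≤ n + 1 := by
      by_contra h
      push_neg at h
      have hF0 : 0 ≤ Int.fract (((n : ℝ) + 1) * α) := Int.fract_nonneg _
      have hF1 : Int.fract (((n : ℝ) + 1) * α) < 1 := Int.fract_lt_one _
      have hcast : ((n : ℝ) + 1) = ((n + 1 : ℕ) : ℝ) := by push_cast; ring
      have hFpos : 0 < Int.fract (((n : ℝ) + 1) * α) := by
        refine lt_of_le_of_ne hF0 (Ne.symm ?_)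
        rw [hcast]
        exact hfne (n + 1) (by omega)
      rcases hcr with hc | hc
      · -- fract((n+1)α) ≤ b
        have hne : Int.fract (((n : ℝ) + 1) * α) ≠ b := by
          intro he
          have : n + 1 = s := hinj (n + 1) s (by rw [← hcast, he, hsα])
          omega
        have hc' : Int.fract (((n : ℝ) + 1) * α) < b := lt_of_le_of_ne hc hne
        have hdv : Int.fract (((n + 1 - s : ℕ) : ℝ) * α) =
            Int.fract (((n : ℝ) + 1) * α) - b + 1 := by
          have e : ((n + 1 - s : ℕ) : ℝ) * α = ((n : ℝ) + 1) * α - (s : ℝ) * α := by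
            rw [Nat.cast_sub (by omega)]; push_cast; ring
          rw [e, myfract_sub_fract, hsα]
          exact myfract_of_neg (by linarith) (by linarith)
        have := hmax (n + 1 - s) (by omega) (by omega)
        rw [hdv] at this
        linarith
      · -- 1 - a ≤ fract((n+1)α)
        have hne : Int.fract (((n : ℝ) + 1) * α) ≠ 1 - a := by
          intro he
          have : n + 1 = r := hinj (n + 1) r (by rw [← hcast, he, hrα])
          omega
        have hc' : 1 - a < Int.fract (((n : ℝ) + 1) * α) := lt_of_le_of_ne hc (Ne.symm hne)
        have hd1 : 1 ≤ n + 1 - r := by omega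
        have hd2 : n + 1 - r ≤ n := by omega
        have hdv : Int.fract (((n + 1 - r : ℕ) : ℝ) * α) =
            Int.fract (((n : ℝ) + 1) * α) - (1 - a) := by
          have e : ((n + 1 - r : ℕ) : ℝ) * α = ((n : ℝ) + 1) * α - (r : ℝ) * α := by
            rw [Nat.cast_sub (by omega)]; push_cast; ring
          rw [e, myfract_sub_fract, hrα]
          exact Int.fract_eq_self.mpr ⟨by linarith, by linarith⟩
        have hdmin := hmin (n + 1 - r) hd1 hd2
        have hdne : Int.fract (((n + 1 - r : ℕ) : ℝ) * α) ≠ b := by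
          intro he
          have : n + 1 - r = s := hinj (n + 1 - r) s (by rw [he, hsα])
          omega
        have hdgt : b < Int.fract (((n + 1 - r : ℕ) : ℝ) * α) :=
          lt_of_le_of_ne hdmin (Ne.symm hdne)
        have hdlt : Int.fract (((n + 1 - r : ℕ) : ℝ) * α) < a := by
          rw [hdv]; linarith
        have hd'1 : 1 ≤ s - (n + 1 - r) := by omega
        have hd'2 : s - (n + 1 - r) ≤ n := by omega
        have hd'v : Int.fract (((s - (n + 1 - r) : ℕ) : ℝ) * α) =
            b - Int.fract (((n + 1 - r : ℕ) : ℝ) * α) + 1 := by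
          have e : ((s - (n + 1 - r) : ℕ) : ℝ) * α =
              (s : ℝ) * α - ((n + 1 - r : ℕ) : ℝ) * α := by
            rw [Nat.cast_sub (by omega)]; push_cast; ring
          rw [e, myfract_sub_fract, hsα]
          exact myfract_of_neg (by linarith) (by linarith)
        have := hmax (s - (n + 1 - r)) hd'1 hd'2
        rw [hd'v] at this
        linarith
    omega
  -- key bounds on fract(mα)
  have key : ∀ m : ℕ, 1 ≤ m → m < r → m + r ≤ n →
      a + b ≤ Int.fract ((m : ℝ) * α) ∧ Int.fract ((m : ℝ) * α) ≤ 1 - (a + b) := by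
    intro m h1 h2 h3
    have hFmin := hmin m h1 (by omega)
    have hFmax := hmax m h1 (by omega)
    have hF0 : 0 ≤ Int.fract ((m : ℝ) * α) := Int.fract_nonneg _
    have hF1 : Int.fract ((m : ℝ) * α) < 1 := Int.fract_lt_one _
    constructor
    · by_contra h
      push_neg at h
      have hdv : Int.fract (((m + r : ℕ) : ℝ) * α) =
          Int.fract (Int.fract ((m : ℝ) * α) + (1 - a)) := by
        have e : ((m + r : ℕ) : ℝ) * α = (m : ℝ) * α + (r : ℝ) * α := by push_cast; ring
        rw [e, myfract_add_fract, hrα]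
      rcases lt_or_ge (Int.fract ((m : ℝ) * α) + (1 - a)) 1 with hlt | hge
      · have h2' : Int.fract (((m + r : ℕ) : ℝ) * α) = Int.fract ((m : ℝ) * α) + (1 - a) := by
          rw [hdv]; exact Int.fract_eq_self.mpr ⟨by linarith, hlt⟩
        have := hmax (m + r) (by omega) h3
        rw [h2'] at this
        linarith
      · have h2' : Int.fract (((m + r : ℕ) : ℝ) * α) =
            Int.fract ((m : ℝ) * α) + (1 - a) - 1 := by
          rw [hdv]; exact myfract_of_ge1 hge (by linarith)
        have := hmin (m + r) (by omega) h3
        rw [h2'] at this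
        linarith
    · by_contra h
      push_neg at h
      have hne : Int.fract ((m : ℝ) * α) ≠ 1 - a := by
        intro he
        have : m = r := hinj m r (by rw [he, hrα])
        omega
      have hlt : Int.fract ((m : ℝ) * α) < 1 - a := lt_of_le_of_ne hFmax hne
      have hdv : Int.fract (((r - m : ℕ) : ℝ) * α) =
          (1 - a) - Int.fract ((m : ℝ) * α) := by
        have e : ((r - m : ℕ) : ℝ) * α = (r : ℝ) * α - (m : ℝ) * α := by
          rw [Nat.cast_sub (by omega)]; push_cast; ring
        rw [e, myfract_sub_fract, hrα]
        exact Int.fract_eq_self.mpr ⟨by linarith, by linarith⟩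
      have := hmin (r - m) (by omega) (by omega)
      rw [hdv] at this
      linarith
  -- bounds for integer multiples
  have hgood : ∀ c : ℤ, c ≠ 0 → -(2 * ((s : ℤ) / 4 - 1) + 1) ≤ c → c ≤ 2 * ((s : ℤ) / 4 - 1) + 1 →
      a + b ≤ Int.fract ((c : ℝ) * α) ∧ Int.fract ((c : ℝ) * α) ≤ 1 - (a + b) := by
    have hrz : (s : ℤ) ≤ 2 * (r : ℤ) := by exact_mod_cast hsr
    have hnz : (n : ℤ) + 1 = (r : ℤ) + (s : ℤ) := by exact_mod_cast hnrs
    have hrz4 : (4 : ℤ) ≤ (s : ℤ) := by exact_mod_cast hs4'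
    have base : ∀ c : ℤ, 1 ≤ c → c ≤ 2 * ((s : ℤ) / 4 - 1) + 1 →
        a + b ≤ Int.fract ((c : ℝ) * α) ∧ Int.fract ((c : ℝ) * α) ≤ 1 - (a + b) := by
      intro c h1 h2
      have hm := key c.toNat (by omega) (by omega) (by omega)
      have e : ((c.toNat : ℕ) : ℝ) = (c : ℝ) := by
        exact_mod_cast congrArg (Int.cast : ℤ → ℝ) (Int.toNat_of_nonneg (by omega))
      rwa [e] at hm
    intro c hc0 hcl hcu
    rcases lt_or_gt_of_ne hc0 with hneg | hpos
    · have hb := base (-c) (by omega) (by omega)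
      have hne : Int.fract (((-c : ℤ) : ℝ) * α) ≠ 0 := myfract_ne_zero α hα (-c) (by omega)
      have e : (c : ℝ) * α = -(((-c : ℤ) : ℝ) * α) := by push_cast; ring
      rw [e, Int.fract_neg hne]
      constructor <;> [linarith [hb.2]; linarith [hb.1]]
    · exact base c hpos hcu
  -- arc length
  have hL : Int.fract ((s : ℝ) * α - (r : ℝ) * α) = a + b := by
    rw [myfract_sub_fract, hsα, hrα]
    have e : b - (1 - a) = (a + b) - 1 := by ring
    have e2 : Int.fract (a + b - 1) = (a + b - 1) + 1 :=
      myfract_of_neg (by linarith) (by linarith)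
    rw [e, e2]
    ring
  have hLpos : 0 < a + b := by linarith
  have hnR : (n : ℝ) = (r : ℝ) + (s : ℝ) - 1 := by
    have : ((n : ℕ) : ℝ) + 1 = ((r : ℕ) : ℝ) + (s : ℕ) := by
      exact_mod_cast congrArg (Nat.cast : ℕ → ℝ) hnrs
    linarith
  -- final
  intro k l hk hkw hl hlw
  refine ⟨?_, ?_, ?_⟩
  · intro hkl
    apply arc_disjoint hLpos
    · have e : ((s : ℝ) + k) * α - ((r : ℝ) + k) * α = (s : ℝ) * α - (r : ℝ) * α := by ring
      rw [e]; exact hL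
    · have e : ((s : ℝ) + l) * α - ((r : ℝ) + l) * α = (s : ℝ) * α - (r : ℝ) * α := by ring
      rw [e]; exact hL
    all_goals {
      have e : ((r : ℝ) + l) * α - ((r : ℝ) + k) * α = ((l - k : ℤ) : ℝ) * α := by
        push_cast; ring
      rw [e]
      first
      | exact (hgood (l - k) (by omega) (by omega) (by omega)).1
      | exact (hgood (l - k) (by omega) (by omega) (by omega)).2 }
  · intro hkl
    apply arc_disjoint hLpos
    · have e : ((n : ℝ) - r - k) * α - ((n : ℝ) - s - k) * α = (s : ℝ) * α - (r : ℝ) * α := by ring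
      rw [e]; exact hL
    · have e : ((n : ℝ) - r - l) * α - ((n : ℝ) - s - l) * α = (s : ℝ) * α - (r : ℝ) * α := by ring
      rw [e]; exact hL
    all_goals {
      have e : ((n : ℝ) - s - l) * α - ((n : ℝ) - s - k) * α = ((k - l : ℤ) : ℝ) * α := by
        push_cast; ring
      rw [e]
      first
      | exact (hgood (k - l) (by omega) (by omega) (by omega)).1
      | exact (hgood (k - l) (by omega) (by omega) (by omega)).2 }
  · apply arc_disjoint hLpos
    · have e : ((s : ℝ) + k) * α - ((r : ℝ) + k) * α = (s : ℝ) * α - (r : ℝ) * α := by ring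
      rw [e]; exact hL
    · have e : ((n : ℝ) - r - l) * α - ((n : ℝ) - s - l) * α = (s : ℝ) * α - (r : ℝ) * α := by ring
      rw [e]; exact hL
    all_goals {
      have e : ((n : ℝ) - s - l) * α - ((r : ℝ) + k) * α = ((-(1 + k + l) : ℤ) : ℝ) * α := by
        push_cast; rw [hnR]; ring
      rw [e]
      first
      | exact (hgood (-(1 + k + l)) (by omega) (by omega) (by omega)).1
      | exact (hgood (-(1 + k + l)) (by omega) (by omega) (by omega)).2 }

/-- **Corollary.** If `(Nᵢ)` is a strictly increasing sequence of integers such that each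
`Nᵢ + 1` is a closest return time and, for every `i`, either `a_{Nᵢ} < b_{Nᵢ}` with
`r_{Nᵢ} ≤ 2 s_{Nᵢ}`, or `a_{Nᵢ} > b_{Nᵢ}` with `s_{Nᵢ} ≤ 2 r_{Nᵢ}`, then for every `i`
either `a_{Nᵢ} < b_{Nᵢ}` and `⌊r_{Nᵢ}/4⌋ - 1 ≤ w(Nᵢ)`, or `a_{Nᵢ} > b_{Nᵢ}` and
`⌊s_{Nᵢ}/4⌋ - 1 ≤ w(Nᵢ)`. -/
theorem wandering_time_lower_bound (α : ℝ) (hα : Irrational α)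
    (N : ℕ → ℕ) (hmono : StrictMono N)
    (hN : ∀ i : ℕ, 1 ≤ N i ∧ IsClosestReturn α (N i) ∧
      ∀ r s : ℕ, IsRIndex α (N i) r → IsSIndex α (N i) s →
        (aseq α (N i) < bseq α (N i) ∧ r ≤ 2 * s) ∨
        (bseq α (N i) < aseq α (N i) ∧ s ≤ 2 * r)) :
    ∀ i : ℕ, ∀ r s : ℕ, IsRIndex α (N i) r → IsSIndex α (N i) s →
      ∀ w : ℤ, IsWanderingTime α (N i) r s w →
        (aseq α (N i) < bseq α (N i) ∧ (r : ℤ) / 4 - 1 ≤ w) ∨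
        (bseq α (N i) < aseq α (N i) ∧ (s : ℤ) / 4 - 1 ≤ w) := by
  intro i r s hri hsi w hw
  obtain ⟨h1, hcr, hdich⟩ := hN i
  rcases hdich r s hri hsi with ⟨hab, hrs⟩ | ⟨hba, hsr⟩
  · exact Or.inl ⟨hab, hw.2 _ (main_case α hα (N i) r s hri hsi hcr hab hrs)⟩
  · exact Or.inr ⟨hba, hw.2 _ (main_case' α hα (N i) r s hri hsi hcr hba hsr)⟩
end

section
/- Let f be a C¹-diffeomorphism of S¹ with irrational rotation number. Then for any λ > 1 there exists n_λ > 0 such that for every integer n > n_λ and every x ∈ S¹ one has λ^{−n} ≤ (fⁿ)'(x) ≤ λⁿ. -/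
open Set Filter

/-- A lift of an orientation-preserving `C¹`-diffeomorphism of the circle `S¹ = ℝ/ℤ`:
a `C¹` map `F : ℝ → ℝ` with `F (x+1) = F x + 1` and `F' > 0` everywhere. -/
structure CircleDiffeo where
  toFun : ℝ → ℝ
  contDiff : ContDiff ℝ 1 toFun
  deriv_pos : ∀ x : ℝ, 0 < deriv toFun x
  commute_translation : ∀ x : ℝ, toFun (x + 1) = toFun x + 1

/-- `f` has rotation number (a lift of) `α`. -/
def hasRotationNumber (f : CircleDiffeo) (α : ℝ) : Prop :=
  Tendsto (fun n : ℕ => f.toFun^[n] 0 / (n : ℝ)) atTop (nhds α)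

/-- The `C¹`-distance between (lifts of) circle maps : sup distance between the maps
plus sup distance between the derivatives (computed over a fundamental domain). -/
noncomputable def distC1 (f g : ℝ → ℝ) : ℝ :=
  (⨆ x : Icc (0:ℝ) 1, |f x.1 - g x.1|) + (⨆ x : Icc (0:ℝ) 1, |deriv f x.1 - deriv g x.1|)

section AuxProof
open Set Filter Function



section Iter
variable {F : ℝ → ℝ}

theorem my_hasDerivAt_iter (hC : ContDiff ℝ 1 F) (n : ℕ) (x : ℝ) :
    HasDerivAt (F^[n]) (∏ k ∈ Finset.range n, deriv F (F^[k] x)) x := by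
  induction n with
  | zero => simpa using hasDerivAt_id x
  | succ n ih =>
      rw [Function.iterate_succ', Finset.prod_range_succ, mul_comm]
      exact ((hC.differentiable one_ne_zero (F^[n] x)).hasDerivAt).comp x ih

theorem my_deriv_iter (hC : ContDiff ℝ 1 F) (n : ℕ) (x : ℝ) :
    deriv (F^[n]) x = ∏ k ∈ Finset.range n, deriv F (F^[k] x) :=
  (my_hasDerivAt_iter hC n x).deriv

theorem my_deriv_iter_pos (hC : ContDiff ℝ 1 F) (hD : ∀ x, 0 < deriv F x) (n : ℕ) (x : ℝ) : 0 < deriv (F^[n]) x := by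
  rw [my_deriv_iter hC n x]
  exact Finset.prod_pos fun k _ => hD _

theorem my_log_deriv_iter (hC : ContDiff ℝ 1 F) (hD : ∀ x, 0 < deriv F x) (n : ℕ) (x : ℝ) :
    Real.log (deriv (F^[n]) x) = ∑ k ∈ Finset.range n, Real.log (deriv F (F^[k] x)) := by
  rw [my_deriv_iter hC n x, Real.log_prod]
  exact fun k _ => (hD _).ne'

theorem my_iter_add_one (hP : ∀ x, F (x + 1) = F x + 1) (n : ℕ) (x : ℝ) : F^[n] (x + 1) = F^[n] x + 1 := by
  induction n with
  | zero => simp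
  | succ n ih => rw [Function.iterate_succ_apply', Function.iterate_succ_apply', ih, hP]

theorem my_deriv_periodic (hP : ∀ x, F (x + 1) = F x + 1) (x : ℝ) : deriv F (x + 1) = deriv F x := by
  have h1 : deriv (fun y => F (y + 1)) x = deriv F (x + 1) := by
    simpa using deriv_comp_add_const F 1 x
  have h2 : (fun y => F (y + 1)) = fun y => F y + 1 := funext hP
  rw [h2] at h1
  rw [← h1, deriv_add_const]

/-- there is a point where the derivative of the n-th iterate equals 1 -/
theorem my_exists_deriv_one (hC : ContDiff ℝ 1 F) (hP : ∀ x, F (x + 1) = F x + 1) (n : ℕ) : ∃ z : ℝ, deriv (F^[n]) z = 1 := by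
  have hdiff : ∀ x : ℝ, HasDerivAt (F^[n]) (deriv (F^[n]) x) x := by
    intro x
    exact (my_hasDerivAt_iter hC n x).congr_deriv (my_deriv_iter hC n x).symm
  have hco : ContinuousOn (F^[n]) (Icc (0:ℝ) 1) :=
    (fun x _ => ((hdiff x).differentiableAt.continuousAt).continuousWithinAt)
  obtain ⟨c, _, hc⟩ := exists_hasDerivAt_eq_slope (F^[n]) (fun x => deriv (F^[n]) x)
    (by norm_num : (0:ℝ) < 1) hco (fun x _ => hdiff x)
  refine ⟨c, ?_⟩
  have h1 : F^[n] 1 = F^[n] 0 + 1 := by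
    simpa using my_iter_add_one hP n 0
  rw [hc, h1]
  ring


end Iter

/-- a 1-periodic function satisfies g (x + m) = g x for integer m -/
theorem my_periodic_int {g : ℝ → ℝ} (hg : ∀ x, g (x + 1) = g x) (x : ℝ) (m : ℤ) :
    g (x + m) = g x := by
  have hper : Function.Periodic g 1 := hg
  simpa using (hper.int_mul m) x

theorem my_periodic_fract {g : ℝ → ℝ} (hg : ∀ x, g (x + 1) = g x) (x : ℝ) :
    g (Int.fract x) = g x := by
  have h : Int.fract x = x + (-⌊x⌋ : ℤ) := by
    rw [Int.fract]; push_cast; ring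
  rw [h, my_periodic_int hg x (-⌊x⌋)]

theorem my_periodic_bound {g : ℝ → ℝ} (hc : Continuous g) (hg : ∀ x, g (x + 1) = g x) :
    ∃ B : ℝ, 0 < B ∧ ∀ x, |g x| ≤ B := by
  obtain ⟨C, hC⟩ := (isCompact_Icc (a := (0:ℝ)) (b := 1)).exists_bound_of_continuousOn
    hc.continuousOn
  refine ⟨max C 1, lt_of_lt_of_le one_pos (le_max_right _ _), fun x => ?_⟩
  rw [← my_periodic_fract hg x]
  exact le_trans (hC _ ⟨Int.fract_nonneg x, (Int.fract_lt_one x).le⟩) (le_max_left _ _)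

/-- uniform continuity for continuous 1-periodic functions, ε-δ form -/
theorem my_periodic_uc {g : ℝ → ℝ} (hc : Continuous g) (hg : ∀ x, g (x + 1) = g x)
    {ε : ℝ} (hε : 0 < ε) :
    ∃ η : ℝ, 0 < η ∧ η ≤ 1 / 2 ∧ ∀ u v : ℝ, |u - v| ≤ η → |g u - g v| ≤ ε := by
  have huc : UniformContinuousOn g (Icc (-1 : ℝ) 2) :=
    (isCompact_Icc).uniformContinuousOn_of_continuous hc.continuousOn
  rw [Metric.uniformContinuousOn_iff] at huc
  obtain ⟨η₀, hη₀, hη⟩ := huc (ε/2) (by linarith)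
  refine ⟨min (η₀/2) (1/2), by positivity, min_le_right _ _, fun u v huv => ?_⟩
  set m : ℤ := ⌊v⌋ with hm
  have h0 : 0 ≤ v - m := by
    have := Int.floor_le v; linarith
  have hlt : v - m < 1 := by
    have := Int.lt_floor_add_one v; linarith
  have h1 : |u - v| ≤ 1/2 := le_trans huv (min_le_right _ _)
  have h2 := abs_le.1 h1
  have hv : v - (m:ℝ) ∈ Icc (-1 : ℝ) 2 := ⟨by linarith, by linarith⟩
  have hu : u - (m:ℝ) ∈ Icc (-1 : ℝ) 2 := ⟨by linarith [h2.1], by linarith [h2.2]⟩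
  have hguv : g (u - m) = g u := by
    have := my_periodic_int hg (u - m) m; simpa using this.symm
  have hgvv : g (v - m) = g v := by
    have := my_periodic_int hg (v - m) m; simpa using this.symm
  rw [← hguv, ← hgvv]
  have hd : dist (u - (m:ℝ)) (v - (m:ℝ)) < η₀ := by
    rw [Real.dist_eq]
    have he : u - (m:ℝ) - (v - (m:ℝ)) = u - v := by ring
    rw [he]
    exact lt_of_le_of_lt (le_trans huv (min_le_left _ _)) (by linarith)
  exact le_of_lt (lt_of_lt_of_le (hη _ hu _ hv hd) (by linarith))


theorem my_dense_of_irrational {α : ℝ} (hα : Irrational α) {γ : ℝ} (hγ : 0 < γ) :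
    ∃ J : ℕ, ∀ θ : ℝ, ∃ j m : ℤ, j.natAbs ≤ J ∧ |j * α + m - θ| < γ := by
  -- the subgroup ℤα + ℤ
  set S : AddSubgroup ℝ :=
    { carrier := {x | ∃ j m : ℤ, x = j * α + m}
      zero_mem' := ⟨0, 0, by norm_num⟩
      add_mem' := by
        rintro a b ⟨j, m, rfl⟩ ⟨j', m', rfl⟩
        exact ⟨j + j', m + m', by push_cast; ring⟩
      neg_mem' := by
        rintro a ⟨j, m, rfl⟩
        exact ⟨-j, -m, by push_cast; ring⟩ } with hS
  have hdense : Dense (S : Set ℝ) := by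
    rcases S.dense_or_cyclic with h | ⟨a, ha⟩
    · exact h
    · exfalso
      have h1 : (1 : ℝ) ∈ S := ⟨0, 1, by norm_num⟩
      have h2 : α ∈ S := ⟨1, 0, by norm_num⟩
      rw [ha, AddSubgroup.mem_closure_singleton] at h1 h2
      obtain ⟨n, hn⟩ := h1
      obtain ⟨k, hk⟩ := h2
      have hn0 : (n : ℝ) ≠ 0 := by
        intro h
        rw [zsmul_eq_mul, h, zero_mul] at hn
        norm_num at hn
      refine hα ⟨(k : ℚ) / n, ?_⟩
      rw [zsmul_eq_mul] at hn hk
      have ha0 : a = 1 / n := by field_simp at hn ⊢; linarith [hn]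
      rw [← hk, ha0]
      push_cast
      field_simp
  -- compactness: finitely many translates cover [0,1]
  have hcov : Icc (0:ℝ) 1 ⊆ ⋃ p : ℤ × ℤ, Metric.ball ((p.1 : ℝ) * α + p.2) γ := by
    intro θ _
    have : θ ∈ closure (S : Set ℝ) := hdense θ
    rw [Metric.mem_closure_iff] at this
    obtain ⟨s, ⟨j, m, rfl⟩, hs⟩ := this γ hγ
    exact mem_iUnion.2 ⟨(j, m), by simpa [Metric.mem_ball, dist_comm] using hs⟩
  obtain ⟨t, ht⟩ := isCompact_Icc.elim_finite_subcover
    (fun p : ℤ × ℤ => Metric.ball ((p.1 : ℝ) * α + p.2) γ) (fun p => Metric.isOpen_ball) hcov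
  refine ⟨t.sup fun p => p.1.natAbs, fun θ => ?_⟩
  have hθ' : Int.fract θ ∈ Icc (0:ℝ) 1 := ⟨Int.fract_nonneg θ, (Int.fract_lt_one θ).le⟩
  obtain ⟨p, hp, hball⟩ := mem_iUnion₂.1 (ht hθ')
  refine ⟨p.1, p.2 + ⌊θ⌋, Finset.le_sup (f := fun p : ℤ × ℤ => p.1.natAbs) hp, ?_⟩
  rw [Metric.mem_ball, Real.dist_eq] at hball
  have : (p.1 : ℝ) * α + (p.2 + ⌊θ⌋ : ℤ) - θ = (p.1 : ℝ) * α + p.2 - Int.fract θ := by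
    rw [Int.fract]; push_cast; ring
  rw [this]
  rw [abs_sub_comm]; exact hball


noncomputable def Ginv (H : CircleDeg1Lift) (s : ℝ) : ℝ := sInf {u | s < H u}

theorem Ginv_set_nonempty (H : CircleDeg1Lift) (s : ℝ) : {u | s < H u}.Nonempty := by
  refine ⟨(⌈s - H 0⌉ + 1 : ℤ), ?_⟩
  have h := H.map_int_of_map_zero (⌈s - H 0⌉ + 1)
  simp only [mem_setOf_eq, h]
  push_cast
  have := Int.le_ceil (s - H 0)
  linarith

theorem Ginv_set_bddBelow (H : CircleDeg1Lift) (s : ℝ) : BddBelow {u | s < H u} := by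
  refine ⟨(-(⌈H 0 - s⌉ + 1) : ℤ), fun u hu => ?_⟩
  by_contra hc
  push_neg at hc
  have h2 : H u ≤ H ((-(⌈H 0 - s⌉ + 1) : ℤ) : ℝ) := H.monotone hc.le
  rw [H.map_int_of_map_zero] at h2
  have h3 := Int.le_ceil (H 0 - s)
  have := hu
  simp only [mem_setOf_eq] at this
  push_cast at h2
  linarith

theorem Ginv_mono (H : CircleDeg1Lift) : Monotone (Ginv H) := by
  intro s t hst
  exact le_csInf (Ginv_set_nonempty H t)
    (fun u hu => csInf_le (Ginv_set_bddBelow H s) (lt_of_le_of_lt hst hu))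

theorem le_Ginv_of_eq (H : CircleDeg1Lift) {w s : ℝ} (hw : H w = s) : w ≤ Ginv H s := by
  refine le_csInf (Ginv_set_nonempty H s) (fun u hu => ?_)
  by_contra hc
  push_neg at hc
  have := H.monotone hc.le
  rw [hw] at this
  exact absurd hu (by simp only [mem_setOf_eq]; exact not_lt.2 this)

theorem Ginv_le_of_lt (H : CircleDeg1Lift) {w s s' : ℝ} (hw : H w = s) (hs : s' < s) :
    Ginv H s' ≤ w :=
  csInf_le (Ginv_set_bddBelow H s') (by simp only [mem_setOf_eq, hw]; exact hs)

theorem Ginv_add_int (H : CircleDeg1Lift) (s : ℝ) (m : ℤ) :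
    Ginv H (s + m) = Ginv H s + m := by
  have hsub : ∀ u : ℝ, s + m < H u ↔ s < H (u - m) := by
    intro u
    rw [H.map_sub_int]
    constructor <;> intro h <;> linarith
  apply le_antisymm
  · have hlow : Ginv H (s + m) - m ≤ Ginv H s := by
      refine le_csInf (Ginv_set_nonempty H s) (fun u hu => ?_)
      have : s + m < H (u + m) := by rw [H.map_add_int]; simpa using hu
      have h2 : Ginv H (s + m) ≤ u + m := csInf_le (Ginv_set_bddBelow H (s + m)) this
      linarith
    linarith
  · refine le_csInf (Ginv_set_nonempty H (s + m)) (fun u hu => ?_)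
    have h1 : s < H (u - m) := (hsub u).1 hu
    have h2 : Ginv H s ≤ u - m := csInf_le (Ginv_set_bddBelow H s) h1
    linarith

theorem Ginv_right_continuous (H : CircleDeg1Lift) (s : ℝ) :
    ContinuousWithinAt (Ginv H) (Ici s) s := by
  rw [Metric.continuousWithinAt_iff]
  intro ε hε
  have hlt : Ginv H s < Ginv H s + ε := by linarith
  obtain ⟨u, hu, hult⟩ := (csInf_lt_iff (Ginv_set_bddBelow H s) (Ginv_set_nonempty H s)).1 hlt
  refine ⟨H u - s, by simpa using hu, fun y hy hdy => ?_⟩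
  rw [Real.dist_eq] at hdy ⊢
  have hys : s ≤ y := hy
  have hy2 : |y - s| = y - s := abs_of_nonneg (by linarith)
  rw [hy2] at hdy
  have h1 : Ginv H y ≤ u := csInf_le (Ginv_set_bddBelow H y) (by simp only [mem_setOf_eq]; linarith)
  have h2 : Ginv H s ≤ Ginv H y := Ginv_mono H hys
  rw [abs_of_nonneg (by linarith)]
  linarith

noncomputable def GS (H : CircleDeg1Lift) : StieltjesFunction ℝ where
  toFun := Ginv H
  mono' := Ginv_mono H
  right_continuous' := Ginv_right_continuous H

theorem Ginv_nonneg_incr (H : CircleDeg1Lift) {a b : ℝ} (hab : a ≤ b) :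
    0 ≤ Ginv H b - Ginv H a := sub_nonneg.2 (Ginv_mono H hab)

theorem my_block_sum (H : CircleDeg1Lift) {δ : ℝ} (hδ : 0 < δ) (hδ2 : δ ≤ 1/2)
    {ι : Type*} [DecidableEq ι] (t : Finset ι) (u : ι → ℝ) (hu : ∀ i ∈ t, u i ∈ Ico (0:ℝ) 1)
    (hsep : ∀ i ∈ t, ∀ j ∈ t, i ≠ j → 2*δ ≤ |u i - u j|) :
    ∑ i ∈ t, (Ginv H (u i + δ) - Ginv H (u i - δ)) ≤ 3 := by
  set μ := (GS H).measure with hμ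
  have hIoc : ∀ i ∈ t, ENNReal.ofReal (Ginv H (u i + δ) - Ginv H (u i - δ))
      = μ (Ioc (u i - δ) (u i + δ)) := by
    intro i _
    rw [hμ, StieltjesFunction.measure_Ioc]
    rfl
  have hdisj : (↑t : Set ι).PairwiseDisjoint (fun i => Ioc (u i - δ) (u i + δ)) := by
    intro i hi j hj hij
    have hs := hsep i hi j hj hij
    simp only [Function.onFun]
    rw [Set.disjoint_left]
    intro x hxi hxj
    rcases abs_cases (u i - u j) with ⟨he, _⟩ | ⟨he, _⟩ <;> rw [he] at hs <;>
      [exact absurd hxi.1 (by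
        have := hxj.2
        push_neg
        linarith);
       exact absurd hxj.1 (by
        have := hxi.2
        push_neg
        linarith)]
  have hsum : ∑ i ∈ t, μ (Ioc (u i - δ) (u i + δ)) = μ (⋃ i ∈ t, Ioc (u i - δ) (u i + δ)) :=
    (MeasureTheory.measure_biUnion_finset hdisj (fun i _ => measurableSet_Ioc)).symm
  have hsub : (⋃ i ∈ t, Ioc (u i - δ) (u i + δ)) ⊆ Ioc (-1 : ℝ) 2 := by
    intro x hx
    obtain ⟨i, hi, hxi⟩ := mem_iUnion₂.1 hx
    obtain ⟨h0, h1⟩ := hu i hi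
    exact ⟨by have := hxi.1; linarith, by have := hxi.2; linarith⟩
  have hbig : μ (Ioc (-1 : ℝ) 2) = ENNReal.ofReal 3 := by
    rw [hμ, StieltjesFunction.measure_Ioc]
    have h3 : (GS H) 2 = (GS H) (-1) + 3 := by
      have := Ginv_add_int H (-1) 3
      norm_num at this
      exact this
    rw [h3]
    norm_num
  have hchain : ENNReal.ofReal (∑ i ∈ t, (Ginv H (u i + δ) - Ginv H (u i - δ)))
      ≤ ENNReal.ofReal 3 := by
    rw [ENNReal.ofReal_sum_of_nonneg (fun i _ => Ginv_nonneg_incr H (by linarith))]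
    rw [Finset.sum_congr rfl hIoc, hsum, ← hbig]
    exact MeasureTheory.measure_mono hsub
  have hnn : 0 ≤ ∑ i ∈ t, (Ginv H (u i + δ) - Ginv H (u i - δ)) :=
    Finset.sum_nonneg (fun i _ => Ginv_nonneg_incr H (by linarith))
  exact (ENNReal.ofReal_le_ofReal_iff (by norm_num)).1 hchain

theorem my_total_sum (H : CircleDeg1Lift) {δ : ℝ} (hδ : 0 < δ) (hδ2 : δ ≤ 1/2)
    (v : ℕ → ℝ) (hv : ∀ k, v k ∈ Ico (0:ℝ) 1) {Q : ℕ} (hQ : 0 < Q)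
    (hsep : ∀ k l : ℕ, k ≠ l → k / Q = l / Q → 2*δ ≤ |v k - v l|)
    (n : ℕ) :
    ∑ k ∈ Finset.range n, (Ginv H (v k + δ) - Ginv H (v k - δ))
      ≤ 3 * ((n / Q : ℕ) + 1) := by
  have hmaps : ∀ k ∈ Finset.range n, k / Q ∈ Finset.range (n / Q + 1) := by
    intro k hk
    rw [Finset.mem_range] at hk ⊢
    exact Nat.lt_succ_of_le (Nat.div_le_div_right hk.le)
  rw [← Finset.sum_fiberwise_of_maps_to hmaps
    (fun k => Ginv H (v k + δ) - Ginv H (v k - δ))]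
  have hbound : ∀ q ∈ Finset.range (n / Q + 1),
      (∑ k ∈ (Finset.range n).filter (fun k => k / Q = q),
        (Ginv H (v k + δ) - Ginv H (v k - δ))) ≤ 3 := by
    intro q _
    refine my_block_sum H hδ hδ2 _ v (fun k _ => hv k) ?_
    intro k hk l hl hkl
    rw [Finset.mem_filter] at hk hl
    exact hsep k l hkl (hk.2.trans hl.2.symm)
  calc ∑ q ∈ Finset.range (n / Q + 1), ∑ k ∈ (Finset.range n).filter (fun k => k / Q = q),
        (Ginv H (v k + δ) - Ginv H (v k - δ))
      ≤ ∑ _q ∈ Finset.range (n / Q + 1), (3:ℝ) := Finset.sum_le_sum hbound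
    _ = 3 * ((n / Q : ℕ) + 1) := by
        rw [Finset.sum_const, Finset.card_range]
        push_cast
        ring


/-- distance from a real number to any integer is at least min(fract, 1-fract) -/
theorem my_dist_int (x : ℝ) (m : ℤ) :
    min (Int.fract x) (1 - Int.fract x) ≤ |x - m| := by
  set k : ℤ := ⌊x⌋ - m with hk
  have hx : x - m = Int.fract x + k := by
    rw [hk, Int.fract]; push_cast; ring
  have h0 : 0 ≤ Int.fract x := Int.fract_nonneg x
  have h1 : Int.fract x < 1 := Int.fract_lt_one x
  rw [hx]
  rcases lt_trichotomy k 0 with hneg | hzero | hpos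
  · have : (k : ℝ) ≤ -1 := by exact_mod_cast Int.le_sub_one_of_lt hneg
    have habs : |Int.fract x + k| = -(Int.fract x + k) := abs_of_nonpos (by linarith)
    rw [habs]
    exact le_trans (min_le_right _ _) (by linarith)
  · rw [hzero]
    push_cast
    rw [add_zero, abs_of_nonneg h0]
    exact min_le_left _ _
  · have : (1 : ℝ) ≤ k := by exact_mod_cast hpos
    have habs : |Int.fract x + k| = Int.fract x + k := abs_of_nonneg (by linarith)
    rw [habs]
    exact le_trans (min_le_right _ _) (by linarith)

/-- uniform separation of multiples of an irrational from integers, for bounded multiples -/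
theorem my_sep {α : ℝ} (hα : Irrational α) (Q : ℕ) (hQ : 2 ≤ Q) :
    ∃ d : ℝ, 0 < d ∧ d ≤ 1/2 ∧ ∀ j : ℤ, j ≠ 0 → j.natAbs < Q → ∀ m : ℤ, d ≤ |j * α - m| := by
  set T : Finset ℕ := Finset.Icc 1 (Q - 1) with hT
  have hTne : T.Nonempty := ⟨1, by simp [hT]; omega⟩
  set d : ℝ := T.inf' hTne (fun j => min (Int.fract (j * α)) (1 - Int.fract (j * α))) with hd
  have hdpos : 0 < d := by
    rw [hd, Finset.lt_inf'_iff]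
    intro j hj
    have hj1 : 1 ≤ j := (Finset.mem_Icc.1 hj).1
    have hirr : Irrational ((j : ℝ) * α) := by
      have hjz : (j : ℤ) ≠ 0 := by exact_mod_cast (by omega : j ≠ 0)
      have := hα.intCast_mul hjz
      push_cast at this
      exact this
    have hf0 : 0 < Int.fract ((j:ℝ) * α) := by
      rcases lt_or_eq_of_le (Int.fract_nonneg ((j:ℝ) * α)) with h | h
      · exact h
      · exfalso
        have hfr : Int.fract ((j:ℝ)*α) = (j:ℝ)*α - ⌊(j:ℝ)*α⌋ := rfl
        have : (j : ℝ) * α = ⌊(j:ℝ) * α⌋ := by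
          rw [hfr] at h
          linarith [h.symm]
        exact hirr.ne_int _ this
    have hf1 : Int.fract ((j:ℝ) * α) < 1 := Int.fract_lt_one _
    simp only [lt_min_iff]
    exact ⟨hf0, by linarith⟩
  have hdhalf : d ≤ 1/2 := by
    obtain ⟨j, hj⟩ := hTne
    have := Finset.inf'_le (f := fun j : ℕ => min (Int.fract (j * α)) (1 - Int.fract (j * α))) hj
    rw [← hd] at this
    refine le_trans this ?_
    rcases le_or_gt (Int.fract ((j:ℕ) * α)) (1/2) with h | h
    · exact le_trans (min_le_left _ _) h
    · exact le_trans (min_le_right _ _) (by linarith)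
  refine ⟨d, hdpos, hdhalf, fun j hj hjQ m => ?_⟩
  -- reduce to positive multiples
  have key : ∀ j' : ℕ, j' ∈ T → ∀ m' : ℤ, d ≤ |(j' : ℝ) * α - m'| := by
    intro j' hj' m'
    have h1 := Finset.inf'_le (f := fun j : ℕ => min (Int.fract (j * α)) (1 - Int.fract (j * α))) hj'
    rw [← hd] at h1
    calc d ≤ min (Int.fract ((j':ℝ) * α)) (1 - Int.fract ((j':ℝ) * α)) := by exact_mod_cast h1
      _ ≤ |(j':ℝ) * α - m'| := my_dist_int _ _
  have hmem : j.natAbs ∈ T := by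
    rw [hT, Finset.mem_Icc]
    constructor <;> omega
  rcases Int.natAbs_eq j with he | he
  · have hce : ((j:ℝ)) = (j.natAbs : ℝ) := by nth_rewrite 1 [he]; push_cast [Nat.cast_natAbs]; ring
    have := key j.natAbs hmem m
    rw [hce]
    exact this
  · have hce : ((j:ℝ)) = -(j.natAbs : ℝ) := by nth_rewrite 1 [he]; push_cast [Nat.cast_natAbs]; ring
    have hre : (j:ℝ) * α - m = -((j.natAbs : ℝ) * α - ((-m : ℤ) : ℝ)) := by
      rw [hce]; push_cast; ring
    rw [hre, abs_neg]
    exact key j.natAbs hmem (-m)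

/-- telescoping: shifting the summation window changes a Birkhoff sum by at most 2 j B -/
theorem my_shift_sum (f : ℕ → ℝ) {B : ℝ} (hB : ∀ k, |f k| ≤ B) (j n : ℕ) :
    |∑ k ∈ Finset.range n, f (j + k) - ∑ k ∈ Finset.range n, f k| ≤ 2 * j * B := by
  have hBnn : 0 ≤ B := le_trans (abs_nonneg _) (hB 0)
  have habs : ∀ (s : Finset ℕ), |∑ k ∈ s, f k| ≤ s.card * B := by
    intro s
    calc |∑ k ∈ s, f k| ≤ ∑ k ∈ s, |f k| := Finset.abs_sum_le_sum_abs _ _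
      _ ≤ ∑ _k ∈ s, B := Finset.sum_le_sum (fun k _ => hB k)
      _ = s.card * B := by rw [Finset.sum_const, nsmul_eq_mul]
  have hshift : ∑ k ∈ Finset.range n, f (j + k) = ∑ k ∈ Finset.Ico j (j + n), f k := by
    rw [Finset.sum_Ico_eq_sum_range]
    simp
  rcases le_or_gt j n with hjn | hjn
  · have h1 : ∑ k ∈ Finset.Ico j (j+n), f k = ∑ k ∈ Finset.Ico j n, f k + ∑ k ∈ Finset.Ico n (j+n), f k :=
      (Finset.sum_Ico_consecutive f hjn (by omega)).symm
    have h2 : ∑ k ∈ Finset.range n, f k = ∑ k ∈ Finset.Ico 0 j, f k + ∑ k ∈ Finset.Ico j n, f k := by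
      rw [Finset.range_eq_Ico]
      exact (Finset.sum_Ico_consecutive f (by omega) hjn).symm
    rw [hshift, h1, h2]
    have e1 := habs (Finset.Ico n (j+n))
    have e2 := habs (Finset.Ico 0 j)
    rw [Nat.card_Ico] at e1 e2
    have hc1 : ((j + n - n : ℕ) : ℝ) = (j : ℝ) := by norm_cast; omega
    have hc2 : ((j - 0 : ℕ) : ℝ) = (j : ℝ) := by norm_cast
    rw [hc1] at e1
    rw [hc2] at e2
    have h3 : (∑ k ∈ Finset.Ico j n, f k + ∑ k ∈ Finset.Ico n (j+n), f k)
        - (∑ k ∈ Finset.Ico 0 j, f k + ∑ k ∈ Finset.Ico j n, f k)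
        = ∑ k ∈ Finset.Ico n (j+n), f k - ∑ k ∈ Finset.Ico 0 j, f k := by ring
    rw [h3]
    calc |∑ k ∈ Finset.Ico n (j+n), f k - ∑ k ∈ Finset.Ico 0 j, f k|
        ≤ |∑ k ∈ Finset.Ico n (j+n), f k| + |∑ k ∈ Finset.Ico 0 j, f k| := abs_sub _ _
      _ ≤ 2 * j * B := by linarith
  · have e1 := habs (Finset.range n)
    have e2 : |∑ k ∈ Finset.range n, f (j + k)| ≤ n * B := by
      rw [hshift]
      have := habs (Finset.Ico j (j + n))
      rw [Nat.card_Ico] at this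
      have hc : ((j + n - j : ℕ) : ℝ) = (n : ℝ) := by norm_cast; omega
      rw [hc] at this
      exact this
    rw [Finset.card_range] at e1
    have hnj : (n : ℝ) ≤ (j : ℝ) := by exact_mod_cast hjn.le
    calc |∑ k ∈ Finset.range n, f (j + k) - ∑ k ∈ Finset.range n, f k|
        ≤ |∑ k ∈ Finset.range n, f (j + k)| + |∑ k ∈ Finset.range n, f k| := abs_sub _ _
      _ ≤ 2 * j * B := by nlinarith


section Main
variable {F : ℝ → ℝ}

theorem my_surj (hC : ContDiff ℝ 1 F) (hP : ∀ x, F (x + 1) = F x + 1)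
    (hmono : StrictMono F) : Function.Bijective F := by
  refine ⟨hmono.injective, fun y => ?_⟩
  have hcont : Continuous F := hC.continuous
  have hint : ∀ m : ℕ, F (m : ℝ) = F 0 + m ∧ F (-(m:ℝ)) = F 0 - m := by
    intro m
    induction m with
    | zero => norm_num
    | succ m ih =>
        constructor
        · push_cast
          have : ((m:ℝ) + 1) = (m:ℝ) + 1 := rfl
          rw [hP (m:ℝ)] at *
          rw [ih.1]; ring
        · push_cast
          have h2 : F (-(m:ℝ) - 1 + 1) = F (-(m:ℝ) - 1) + 1 := hP _
          have h3 : -(m:ℝ) - 1 + 1 = -(m:ℝ) := by ring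
          rw [h3] at h2
          have : F (-((m:ℝ)+1)) = F (-(m:ℝ)) - 1 := by
            have h4 : -((m:ℝ)+1) = -(m:ℝ) - 1 := by ring
            rw [h4]; linarith
          rw [this, ih.2]; ring
  set m : ℕ := ⌈|y - F 0|⌉₊ + 1 with hm
  have hub : y ≤ F (m : ℝ) := by
    rw [(hint m).1]
    have := Nat.le_ceil |y - F 0|
    have h2 := le_abs_self (y - F 0)
    have h3 : (⌈|y - F 0|⌉₊ : ℝ) ≤ m := by rw [hm]; push_cast; linarith
    linarith
  have hlb : F (-(m:ℝ)) ≤ y := by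
    rw [(hint m).2]
    have := Nat.le_ceil |y - F 0|
    have h2 := neg_abs_le (y - F 0)
    have h3 : (⌈|y - F 0|⌉₊ : ℝ) ≤ m := by rw [hm]; push_cast; linarith
    linarith
  have hmm : (-(m:ℝ)) ≤ (m:ℝ) := by
    have : (0:ℝ) ≤ (m:ℝ) := Nat.cast_nonneg m
    linarith
  obtain ⟨x, _, hx⟩ := intermediate_value_Icc hmm hcont.continuousOn ⟨hlb, hub⟩
  exact ⟨x, hx⟩

end Main

theorem my_setup (α : ℝ) (hC : ContDiff ℝ 1 F) (hD : ∀ x, 0 < deriv F x)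
    (hP : ∀ x, F (x + 1) = F x + 1)
    (hf : Tendsto (fun n : ℕ => F^[n] 0 / (n : ℝ)) atTop (nhds α)) :
    ∃ H : CircleDeg1Lift, ∀ x, H (F x) = H x + α := by
  have hmono : StrictMono F := strictMono_of_deriv_pos hD
  set fl : CircleDeg1Lift := ⟨⟨F, hmono.monotone⟩, hP⟩ with hfl
  have hflc : ⇑fl = F := rfl
  have hbij : Function.Bijective (fl : CircleDeg1Lift) := by
    rw [hflc]; exact my_surj hC hP hmono
  have hτ : fl.translationNumber = α := by
    have h1 := fl.tendsto_translation_number₀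
    have h2 : (fun n : ℕ => (fl ^ n) 0 / (n:ℝ)) = fun n : ℕ => F^[n] 0 / (n:ℝ) := by
      funext n
      rw [CircleDeg1Lift.coe_pow]
      rfl
    rw [h2] at h1
    exact tendsto_nhds_unique h1 hf
  set tr : CircleDeg1Lift := ↑(CircleDeg1Lift.translate (Multiplicative.ofAdd α)) with htr
  have hbij2 : Function.Bijective (tr : CircleDeg1Lift) :=
    CircleDeg1Lift.isUnit_iff_bijective.1 (CircleDeg1Lift.translate (Multiplicative.ofAdd α)).isUnit
  have hττ : fl.translationNumber = tr.translationNumber := by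
    rw [hτ, htr, CircleDeg1Lift.translationNumber_translate]
  obtain ⟨H, hH⟩ := CircleDeg1Lift.semiconj_of_bijective_of_translationNumber_eq hbij hbij2 hττ
  refine ⟨H, fun x => ?_⟩
  have := hH x
  rw [hflc] at this
  rw [this, htr, CircleDeg1Lift.translate_apply]
  ring
-- KEY THEOREM (appended to core)
theorem my_key (α : ℝ) (hα : Irrational α) {F : ℝ → ℝ}
    (hC : ContDiff ℝ 1 F) (hD : ∀ x, 0 < deriv F x) (hP : ∀ x, F (x + 1) = F x + 1)
    (H : CircleDeg1Lift) (hH : ∀ x, H (F x) = H x + α)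
    {ε : ℝ} (hε : 0 < ε) :
    ∃ N : ℕ, ∀ n : ℕ, N ≤ n → ∀ x : ℝ, |Real.log (deriv (F^[n]) x)| ≤ 8 * (n : ℝ) * ε := by
  classical
  -- the cocycle φ
  set φ : ℝ → ℝ := fun y => Real.log (deriv F y) with hφdef
  have hφc : Continuous φ := by
    have h1 : Continuous (deriv F) := hC.continuous_deriv le_rfl
    exact continuous_iff_continuousAt.2
      (fun x => (Real.continuousAt_log (hD x).ne').comp h1.continuousAt)
  have hφper : ∀ y, φ (y + 1) = φ y := by
    intro y
    simp only [hφdef]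
    rw [my_deriv_periodic hP]
  obtain ⟨B, hB0, hB⟩ := my_periodic_bound hφc hφper
  -- uniform continuity scale for φ
  obtain ⟨η, hη0, hη2, hηuc⟩ := my_periodic_uc hφc hφper hε
  -- block length
  set Q : ℕ := ⌈6 * B / (ε * η)⌉₊ + 2 with hQdef
  have hQ2 : 2 ≤ Q := by omega
  have hQpos : 0 < Q := by omega
  have hQbig : 6 * B / (ε * η) ≤ (Q : ℝ) := by
    have := Nat.le_ceil (6 * B / (ε * η))
    have h2 : ((⌈6 * B / (ε * η)⌉₊ : ℕ) : ℝ) ≤ (Q : ℝ) := by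
      rw [hQdef]; push_cast; linarith
    linarith
  -- separation scale
  obtain ⟨d, hd0, hd2, hdsep⟩ := my_sep hα Q hQ2
  set δ : ℝ := d / 3 with hδdef
  have hδ0 : 0 < δ := by rw [hδdef]; linarith
  have hδ2 : δ ≤ 1/2 := by rw [hδdef]; linarith
  -- the quotient observable and its mollification
  set ψ : ℝ → ℝ := fun y => φ (Ginv H y) with hψdef
  have hψm : Measurable ψ := hφc.measurable.comp (Ginv_mono H).measurable
  have hψb : ∀ y, |ψ y| ≤ B := fun y => hB _
  have hψint : ∀ a b : ℝ, IntervalIntegrable ψ MeasureTheory.volume a b := by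
    intro a b
    rw [intervalIntegrable_iff]
    refine MeasureTheory.Integrable.mono' (g := fun _ => B)
      ((MeasureTheory.integrableOn_const_iff (by simp)).2 (Or.inr measure_Ioc_lt_top))
      hψm.aestronglyMeasurable (MeasureTheory.ae_of_all _ (fun y => by
        rw [Real.norm_eq_abs]; exact hψb y))
  set ψδ : ℝ → ℝ := fun s => (∫ y in s..(s+δ), ψ y) / δ with hψδdef
  have hψδc : Continuous ψδ := by
    have hprim : Continuous (fun s => ∫ y in (0:ℝ)..s, ψ y) :=
      intervalIntegral.continuous_primitive hψint 0
    have heq : ∀ s : ℝ, (∫ y in s..(s+δ), ψ y)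
        = (∫ y in (0:ℝ)..(s+δ), ψ y) - (∫ y in (0:ℝ)..s, ψ y) := by
      intro s
      rw [← intervalIntegral.integral_add_adjacent_intervals (hψint 0 s) (hψint s (s+δ))]
      ring
    have : ψδ = fun s => ((∫ y in (0:ℝ)..(s+δ), ψ y) - (∫ y in (0:ℝ)..s, ψ y)) / δ := by
      funext s; rw [hψδdef]; simp only; rw [heq]
    rw [this]
    exact ((hprim.comp (continuous_id.add continuous_const)).sub hprim).div_const δ
  have hψδb : ∀ s, |ψδ s| ≤ B := by
    intro s
    rw [hψδdef]
    simp only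
    rw [abs_div, abs_of_pos hδ0, div_le_iff₀ hδ0]
    have := intervalIntegral.norm_integral_le_of_norm_le_const
      (f := ψ) (a := s) (b := s + δ) (C := B) (fun y _ => by rw [Real.norm_eq_abs]; exact hψb y)
    rw [Real.norm_eq_abs] at this
    calc |∫ y in s..(s+δ), ψ y| ≤ B * |s + δ - s| := this
      _ = B * δ := by rw [show s + δ - s = δ by ring, abs_of_pos hδ0]
  have hψper : ∀ y, ψ (y + 1) = ψ y := by
    intro y
    rw [hψdef]
    simp only
    have : Ginv H (y + 1) = Ginv H y + 1 := by
      have := Ginv_add_int H y 1; push_cast at this; simpa using this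
    rw [this, hφper]
  have hψδper : ∀ s, ψδ (s + 1) = ψδ s := by
    intro s
    rw [hψδdef]
    simp only
    have h1 : (∫ y in (s+1)..(s+1+δ), ψ y) = ∫ y in s..(s+δ), ψ (y + 1) := by
      rw [intervalIntegral.integral_comp_add_right (fun y => ψ y) 1]
      norm_num
      rw [show s + 1 + δ = s + δ + 1 by ring]
    rw [h1]
    congr 1
    exact intervalIntegral.integral_congr (fun y _ => hψper y)
  -- Birkhoff sums of the mollified observable along the rotation
  set W : ℕ → ℝ → ℝ := fun n t => ∑ k ∈ Finset.range n, ψδ (t + k * α) with hWdef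
  -- iterates are semiconjugated
  have hHiter : ∀ (k : ℕ) (x : ℝ), H (F^[k] x) = H x + k * α := by
    intro k x
    induction k with
    | zero => simp
    | succ k ih =>
        rw [Function.iterate_succ_apply', hH, ih]
        push_cast
        ring
  -- THE MASTER ESTIMATE
  have master : ∀ (n : ℕ) (x : ℝ),
      |(∑ k ∈ Finset.range n, φ (F^[k] x)) - W n (H x)|
        ≤ (n : ℝ) * ε + (6 * B / η) * (((n / Q : ℕ) : ℝ) + 1) := by
    intro n x
    set t : ℝ := H x with htdef
    set sq : ℕ → ℝ := fun k => t + k * α with hsdef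
    set b : ℕ → ℝ := fun k => Ginv H (sq k + δ) - Ginv H (sq k - δ) with hbdef
    have hbnn : ∀ k, 0 ≤ b k := fun k => Ginv_nonneg_incr H (by linarith)
    have hv : ∀ k, Int.fract (sq k) ∈ Ico (0:ℝ) 1 :=
      fun k => ⟨Int.fract_nonneg _, Int.fract_lt_one _⟩
    have hbfr : ∀ k, b k = Ginv H (Int.fract (sq k) + δ) - Ginv H (Int.fract (sq k) - δ) := by
      intro k
      have e1 : sq k + δ = (Int.fract (sq k) + δ) + ((⌊sq k⌋ : ℤ) : ℝ) := by
        rw [Int.fract]; ring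
      have e2 : sq k - δ = (Int.fract (sq k) - δ) + ((⌊sq k⌋ : ℤ) : ℝ) := by
        rw [Int.fract]; ring
      simp only [hbdef]
      rw [e1, e2, Ginv_add_int, Ginv_add_int]
      ring
    have hsep2 : ∀ k l : ℕ, k ≠ l → k / Q = l / Q →
        2*δ ≤ |Int.fract (sq k) - Int.fract (sq l)| := by
      intro k l hkl hQkl
      set j : ℤ := (k : ℤ) - l with hjdef
      set m : ℤ := ⌊sq k⌋ - ⌊sq l⌋ with hmdef
      have hm : Int.fract (sq k) - Int.fract (sq l) = (j : ℝ) * α - (m : ℝ) := by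
        rw [hjdef, hmdef, Int.fract, Int.fract, hsdef]
        push_cast
        ring
      have hjne : j ≠ 0 := sub_ne_zero.2 (by exact_mod_cast hkl)
      have hjQ : j.natAbs < Q := by
        have h1 : k % Q < Q := Nat.mod_lt _ hQpos
        have h2 : l % Q < Q := Nat.mod_lt _ hQpos
        have hk' := Nat.div_add_mod k Q
        have hl' := Nat.div_add_mod l Q
        have he : Q * (k / Q) = Q * (l / Q) := by rw [hQkl]
        omega
      have hds := hdsep j hjne hjQ m
      rw [hm]
      calc 2*δ = 2*d/3 := by rw [hδdef]; ring
        _ ≤ d := by linarith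
        _ ≤ _ := hds
    have htot := my_total_sum H hδ0 hδ2 (fun k => Int.fract (sq k)) hv hQpos hsep2 n
    have htot' : ∑ k ∈ Finset.range n, b k ≤ 3 * (((n / Q : ℕ) : ℝ) + 1) := by
      calc ∑ k ∈ Finset.range n, b k
          = ∑ k ∈ Finset.range n,
            (Ginv H (Int.fract (sq k) + δ) - Ginv H (Int.fract (sq k) - δ)) :=
            Finset.sum_congr rfl (fun k _ => hbfr k)
        _ ≤ 3 * (((n / Q : ℕ) : ℝ) + 1) := htot
    set bad : Finset ℕ := (Finset.range n).filter (fun k => η < b k) with hbaddef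
    have hcard : (bad.card : ℝ) * η ≤ 3 * (((n / Q : ℕ) : ℝ) + 1) := by
      calc (bad.card : ℝ) * η = ∑ _k ∈ bad, η := by
            rw [Finset.sum_const, nsmul_eq_mul]
        _ ≤ ∑ k ∈ bad, b k :=
            Finset.sum_le_sum (fun k hk => (le_of_lt (Finset.mem_filter.1 hk).2))
        _ ≤ ∑ k ∈ Finset.range n, b k :=
            Finset.sum_le_sum_of_subset_of_nonneg (Finset.filter_subset _ _)
              (fun k _ _ => hbnn k)
        _ ≤ 3 * (((n / Q : ℕ) : ℝ) + 1) := htot'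
    have hterm : ∀ k ∈ Finset.range n,
        |φ (F^[k] x) - ψδ (sq k)| ≤ ε + (if η < b k then 2*B else 0) := by
      intro k _
      by_cases hbk : η < b k
      · rw [if_pos hbk]
        have h1 : |φ (F^[k] x) - ψδ (sq k)| ≤ B + B := by
          calc |φ (F^[k] x) - ψδ (sq k)| ≤ |φ (F^[k] x)| + |ψδ (sq k)| := abs_sub _ _
            _ ≤ B + B := add_le_add (hB _) (hψδb _)
        linarith
      · rw [if_neg hbk]
        push_neg at hbk
        simp only [hbdef] at hbk
        have hsk : H (F^[k] x) = sq k := hHiter k x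
        have hup : F^[k] x ≤ Ginv H (sq k) := le_Ginv_of_eq H hsk
        have hlow : Ginv H (sq k - δ) ≤ F^[k] x := Ginv_le_of_lt H hsk (by linarith)
        have hptw : ∀ y ∈ Set.uIoc (sq k) (sq k + δ), ‖ψ y - φ (F^[k] x)‖ ≤ ε := by
          intro y hy
          rw [Set.uIoc_of_le (by linarith)] at hy
          have h1 : Ginv H (sq k) ≤ Ginv H y := Ginv_mono H (le_of_lt hy.1)
          have h2 : Ginv H y ≤ Ginv H (sq k + δ) := Ginv_mono H hy.2
          have h3 : Ginv H (sq k - δ) ≤ Ginv H (sq k) := Ginv_mono H (by linarith)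
          rw [Real.norm_eq_abs]
          apply hηuc
          rw [abs_le]
          constructor <;> [linarith; linarith]
        have hint2 : |(∫ y in (sq k)..(sq k + δ), (ψ y - φ (F^[k] x)))| ≤ ε * δ := by
          have h5 := intervalIntegral.norm_integral_le_of_norm_le_const hptw
          rw [Real.norm_eq_abs] at h5
          calc |(∫ y in (sq k)..(sq k + δ), (ψ y - φ (F^[k] x)))|
              ≤ ε * |sq k + δ - sq k| := h5
            _ = ε * δ := by rw [show sq k + δ - sq k = δ by ring, abs_of_pos hδ0]
        have hsplit : ψδ (sq k) - φ (F^[k] x)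
            = (∫ y in (sq k)..(sq k + δ), (ψ y - φ (F^[k] x))) / δ := by
          rw [intervalIntegral.integral_sub (hψint _ _) intervalIntegrable_const,
            intervalIntegral.integral_const]
          simp only [hψδdef]
          rw [show sq k + δ - sq k = δ by ring]
          rw [smul_eq_mul]
          field_simp
        have h6 : |φ (F^[k] x) - ψδ (sq k)| ≤ ε := by
          rw [abs_sub_comm, hsplit, abs_div, abs_of_pos hδ0, div_le_iff₀ hδ0]
          exact hint2
        linarith
    have hWt : W n t = ∑ k ∈ Finset.range n, ψδ (sq k) := rfl
    calc |(∑ k ∈ Finset.range n, φ (F^[k] x)) - W n t|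
        = |∑ k ∈ Finset.range n, (φ (F^[k] x) - ψδ (sq k))| := by
          rw [hWt, Finset.sum_sub_distrib]
      _ ≤ ∑ k ∈ Finset.range n, |φ (F^[k] x) - ψδ (sq k)| :=
          Finset.abs_sum_le_sum_abs _ _
      _ ≤ ∑ k ∈ Finset.range n, (ε + (if η < b k then 2*B else 0)) :=
          Finset.sum_le_sum hterm
      _ = (n : ℝ) * ε + ∑ k ∈ Finset.range n, (if η < b k then 2*B else 0) := by
          rw [Finset.sum_add_distrib, Finset.sum_const, Finset.card_range, nsmul_eq_mul]
      _ = (n : ℝ) * ε + (bad.card : ℝ) * (2*B) := by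
          congr 1
          rw [← Finset.sum_filter, ← hbaddef, Finset.sum_const, nsmul_eq_mul]
      _ ≤ (n : ℝ) * ε + (6 * B / η) * (((n / Q : ℕ) : ℝ) + 1) := by
          have hc2 : (bad.card : ℝ) ≤ 3 * (((n / Q : ℕ) : ℝ) + 1) / η := by
            rw [le_div_iff₀ hη0]
            exact hcard
          have hc3 : (bad.card : ℝ) * (2*B) ≤ (3 * (((n / Q : ℕ) : ℝ) + 1) / η) * (2*B) := by
            apply mul_le_mul_of_nonneg_right hc2
            linarith
          have he : (3 * (((n / Q : ℕ) : ℝ) + 1) / η) * (2*B)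
              = (6 * B / η) * (((n / Q : ℕ) : ℝ) + 1) := by
            field_simp
            ring
          rw [he] at hc3
          linarith
  -- THE OSCILLATION ESTIMATE
  obtain ⟨J, hosc⟩ : ∃ J : ℕ, ∀ (n : ℕ) (t t' : ℝ),
      |W n t - W n t'| ≤ (n : ℝ) * ε + 2 * (J : ℝ) * B := by
    obtain ⟨γ, hγ0, hγ2, hγuc⟩ := my_periodic_uc hψδc hψδper hε
    obtain ⟨J, hJ⟩ := my_dense_of_irrational hα hγ0
    refine ⟨J, fun n t t' => ?_⟩
    obtain ⟨j, m, hjJ, hjm⟩ := hJ (t' - t)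
    have hstep : ∀ (t₀ : ℝ) (p : ℕ), |W n (t₀ + p * α) - W n t₀| ≤ 2 * p * B := by
      intro t₀ p
      have hshift := my_shift_sum (fun k : ℕ => ψδ (t₀ + k*α)) (fun k => hψδb _) p n
      have hW1 : W n (t₀ + p*α) = ∑ k ∈ Finset.range n, (fun k : ℕ => ψδ (t₀ + k*α)) (p + k) := by
        rw [hWdef]
        refine Finset.sum_congr rfl (fun k _ => ?_)
        simp only
        congr 1
        push_cast
        ring
      have hW2 : W n t₀ = ∑ k ∈ Finset.range n, (fun k : ℕ => ψδ (t₀ + k*α)) k := rfl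
      rw [hW1, hW2]
      exact hshift
    have hZint : ∀ (u : ℝ) (m' : ℤ), W n (u + m') = W n u := by
      intro u m'
      rw [hWdef]
      refine Finset.sum_congr rfl (fun k _ => ?_)
      rw [show u + (m':ℝ) + (k:ℝ)*α = (u + (k:ℝ)*α) + (m':ℝ) by ring, my_periodic_int hψδper _ m']
    have hWjm : ∀ j' : ℤ, |W n (t + j'*α) - W n t| ≤ 2 * (j'.natAbs : ℝ) * B := by
      intro j'
      rcases Int.natAbs_eq j' with he | he
      · have hce : ((j':ℝ)) = (j'.natAbs : ℝ) := by
          nth_rewrite 1 [he]; push_cast [Nat.cast_natAbs]; ring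
        rw [hce]
        exact hstep t j'.natAbs
      · have hce : ((j':ℝ)) = -(j'.natAbs : ℝ) := by
          nth_rewrite 1 [he]; push_cast [Nat.cast_natAbs]; ring
        have hback : t = (t + (j':ℝ)*α) + (j'.natAbs : ℝ)*α := by rw [hce]; ring
        rw [abs_sub_comm]
        nth_rewrite 1 [hback]
        exact hstep (t + (j':ℝ)*α) j'.natAbs
    have hclose : |(t + (j:ℝ)*α + m) - t'| < γ := by
      rw [show (t + (j:ℝ)*α + m) - t' = (j:ℝ) * α + m - (t' - t) by ring]
      exact hjm
    have h2 : |W n (t + (j:ℝ)*α + m) - W n t'| ≤ (n:ℝ) * ε := by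
      rw [hWdef]
      simp only
      rw [← Finset.sum_sub_distrib]
      calc |∑ k ∈ Finset.range n, (ψδ (t + (j:ℝ)*α + m + k*α) - ψδ (t' + k*α))|
          ≤ ∑ k ∈ Finset.range n, |ψδ (t + (j:ℝ)*α + m + k*α) - ψδ (t' + k*α)| :=
            Finset.abs_sum_le_sum_abs _ _
        _ ≤ ∑ _k ∈ Finset.range n, ε := by
            refine Finset.sum_le_sum (fun k _ => hγuc _ _ ?_)
            rw [show (t + (j:ℝ)*α + m + k*α) - (t' + k*α) = (t + (j:ℝ)*α + m) - t' by ring]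
            exact hclose.le
        _ = (n:ℝ) * ε := by rw [Finset.sum_const, Finset.card_range, nsmul_eq_mul]
    have hWu : W n (t + (j:ℝ)*α + m) = W n (t + (j:ℝ)*α) := hZint _ m
    have hj1 : |W n t - W n (t + (j:ℝ)*α)| ≤ 2 * (J:ℝ) * B := by
      rw [abs_sub_comm]
      refine le_trans (hWjm j) ?_
      have : (j.natAbs : ℝ) ≤ (J : ℝ) := by exact_mod_cast hjJ
      nlinarith
    calc |W n t - W n t'|
        ≤ |W n t - W n (t + (j:ℝ)*α)| + |W n (t + (j:ℝ)*α) - W n t'| := abs_sub_le _ _ _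
      _ ≤ 2 * (J:ℝ) * B + (n:ℝ) * ε := by
          rw [← hWu] at *
          exact add_le_add hj1 h2
      _ = (n:ℝ) * ε + 2 * (J:ℝ) * B := by ring
  -- FINAL ASSEMBLY
  refine ⟨max (⌈6*B/(η*ε)⌉₊ + 1) (⌈2*(J:ℝ)*B/ε⌉₊ + 1), fun n hn x => ?_⟩
  obtain ⟨z, hz⟩ := my_exists_deriv_one hC hP n
  have hSx : Real.log (deriv (F^[n]) x) = ∑ k ∈ Finset.range n, φ (F^[k] x) :=
    my_log_deriv_iter hC hD n x
  have hSz : (∑ k ∈ Finset.range n, φ (F^[k] z)) = 0 := by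
    rw [← my_log_deriv_iter hC hD n z, hz, Real.log_one]
  -- numeric facts about n
  have hn1 : 6*B/(η*ε) ≤ (n:ℝ) := by
    have h1 : (⌈6*B/(η*ε)⌉₊ : ℝ) ≤ (n:ℝ) := by
      have : ⌈6*B/(η*ε)⌉₊ ≤ n := le_trans (by omega) (le_trans (le_max_left _ _) hn)
      exact_mod_cast this
    exact le_trans (Nat.le_ceil _) h1
  have hn2 : 2*(J:ℝ)*B/ε ≤ (n:ℝ) := by
    have h1 : (⌈2*(J:ℝ)*B/ε⌉₊ : ℝ) ≤ (n:ℝ) := by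
      have : ⌈2*(J:ℝ)*B/ε⌉₊ ≤ n := le_trans (by omega) (le_trans (le_max_right _ _) hn)
      exact_mod_cast this
    exact le_trans (Nat.le_ceil _) h1
  have hεη : 0 < ε * η := mul_pos hε hη0
  -- the master error is at most 3 n ε
  have hmaster_bound : (n:ℝ) * ε + (6 * B / η) * (((n / Q : ℕ) : ℝ) + 1) ≤ 3 * (n:ℝ) * ε := by
    have hdivle : ((n / Q : ℕ) : ℝ) ≤ (n:ℝ) / (Q:ℝ) := Nat.cast_div_le
    have hQr : (0:ℝ) < (Q:ℝ) := by exact_mod_cast hQpos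
    have key1 : 6 * B / η ≤ ε * (Q:ℝ) := by
      have := mul_le_mul_of_nonneg_left hQbig (le_of_lt hε)
      calc 6 * B / η = ε * (6 * B / (ε * η)) := by field_simp
        _ ≤ ε * (Q:ℝ) := this
    have key2 : (6 * B / η) * ((n:ℝ) / (Q:ℝ)) ≤ (n:ℝ) * ε := by
      have hnQ : (0:ℝ) ≤ (n:ℝ) / (Q:ℝ) := by positivity
      calc (6 * B / η) * ((n:ℝ) / (Q:ℝ)) ≤ (ε * (Q:ℝ)) * ((n:ℝ) / (Q:ℝ)) :=
            mul_le_mul_of_nonneg_right key1 hnQ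
        _ = (n:ℝ) * ε := by field_simp
    have key3 : 6 * B / η ≤ (n:ℝ) * ε := by
      have h4 : 6*B/(η*ε) * ε ≤ (n:ℝ) * ε := mul_le_mul_of_nonneg_right hn1 (le_of_lt hε)
      calc 6 * B / η = 6*B/(η*ε) * ε := by field_simp
        _ ≤ (n:ℝ) * ε := h4
    have hBη : (0:ℝ) ≤ 6 * B / η := by positivity
    have h5 : (6 * B / η) * (((n / Q : ℕ) : ℝ) + 1)
        ≤ (6 * B / η) * ((n:ℝ) / (Q:ℝ)) + 6 * B / η := by
      have := mul_le_mul_of_nonneg_left hdivle hBη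
      ring_nf
      ring_nf at this
      linarith
    linarith
  have hosc_bound : (n:ℝ) * ε + 2 * (J:ℝ) * B ≤ 2 * (n:ℝ) * ε := by
    have h4 : 2*(J:ℝ)*B/ε * ε ≤ (n:ℝ) * ε := mul_le_mul_of_nonneg_right hn2 (le_of_lt hε)
    have h5 : 2*(J:ℝ)*B/ε * ε = 2*(J:ℝ)*B := by field_simp
    linarith
  have hmx := master n x
  have hmz := master n z
  have hoz := hosc n (H x) (H z)
  calc |Real.log (deriv (F^[n]) x)|
      = |(∑ k ∈ Finset.range n, φ (F^[k] x)) - (∑ k ∈ Finset.range n, φ (F^[k] z))| := by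
        rw [hSx, hSz, sub_zero]
    _ ≤ |(∑ k ∈ Finset.range n, φ (F^[k] x)) - W n (H x)|
        + |W n (H x) - (∑ k ∈ Finset.range n, φ (F^[k] z))| := abs_sub_le _ _ _
    _ ≤ |(∑ k ∈ Finset.range n, φ (F^[k] x)) - W n (H x)|
        + (|W n (H x) - W n (H z)| + |W n (H z) - (∑ k ∈ Finset.range n, φ (F^[k] z))|) := by
          have := abs_sub_le (W n (H x)) (W n (H z)) (∑ k ∈ Finset.range n, φ (F^[k] z))
          linarith
    _ ≤ 3 * (n:ℝ) * ε + (2 * (n:ℝ) * ε + 3 * (n:ℝ) * ε) := by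
        have e1 : |(∑ k ∈ Finset.range n, φ (F^[k] x)) - W n (H x)| ≤ 3 * (n:ℝ) * ε :=
          le_trans hmx hmaster_bound
        have e2 : |W n (H x) - W n (H z)| ≤ 2 * (n:ℝ) * ε := le_trans hoz hosc_bound
        have e3 : |W n (H z) - (∑ k ∈ Finset.range n, φ (F^[k] z))| ≤ 3 * (n:ℝ) * ε := by
          rw [abs_sub_comm]
          exact le_trans hmz hmaster_bound
        linarith
    _ = 8 * (n : ℝ) * ε := by ring

end AuxProof

/-- **Lemma.** Let `f` be a `C¹`-diffeomorphism of `S¹` with irrational rotation number.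
For any `λ > 1` there is `n_λ > 0` such that `λ⁻ⁿ ≤ (fⁿ)'(x) ≤ λⁿ` for every `n > n_λ`
and every `x ∈ S¹`. -/
theorem subexponential_derivatives (α : ℝ) (hα : Irrational α)
    (f : CircleDiffeo) (hf : hasRotationNumber f α) (lam : ℝ) (hlam : 1 < lam) :
    ∃ nlam : ℕ, 0 < nlam ∧ ∀ n : ℕ, nlam < n → ∀ x : ℝ,
      (lam ^ n)⁻¹ ≤ deriv (f.toFun^[n]) x ∧ deriv (f.toFun^[n]) x ≤ lam ^ n := by
  have hlog : 0 < Real.log lam := Real.log_pos hlam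
  have hε : 0 < Real.log lam / 8 := by linarith
  obtain ⟨H, hH⟩ := my_setup α f.contDiff f.deriv_pos f.commute_translation hf
  obtain ⟨N, hN⟩ := my_key α hα f.contDiff f.deriv_pos f.commute_translation H hH hε
  refine ⟨N + 1, by omega, fun n hn x => ?_⟩
  have hb := hN n (by omega) x
  have h8 : 8 * (n:ℝ) * (Real.log lam / 8) = (n:ℝ) * Real.log lam := by ring
  rw [h8] at hb
  have habs := abs_le.1 hb
  have hDpos := my_deriv_iter_pos f.contDiff f.deriv_pos n x
  have hlam0 : (0:ℝ) < lam := lt_trans one_pos hlam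
  have hpow : (0:ℝ) < lam ^ n := pow_pos hlam0 n
  have hlogpow : Real.log (lam ^ n) = (n:ℝ) * Real.log lam := by
    rw [Real.log_pow]
  constructor
  · rw [← Real.log_le_log_iff (by positivity) hDpos, Real.log_inv, hlogpow]
    linarith [habs.1]
  · rw [← Real.log_le_log_iff hDpos hpow, hlogpow]
    linarith [habs.2]
end

section
/- Let (w_i) be a sequence of positive integers tending to infinity and (μ_i) a sequence of reals greater than 1 tending to 1. For each i, let t_{i,1}, t_{i,2} ∈ (0,1) satisfy t_{i,η}/(1 − t_{i,η}) ∈ [μ_i^{−w_i}, μ_i^{w_i}] for η ∈ {1,2}. Then for every ε > 0 there exists i₀ such that for every i ≥ i₀ there exist C¹ diffeomorphisms H_{i,0}, …, H_{i,w_i−1} of [0,1], each ε-C¹-close to the identity, such that H_{i,w_i−1} ∘ ⋯ ∘ H_{i,0}(t_{i,1}) = t_{i,2}. -/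
open Set Filter
structure IsIntervalDiffeo (h : ℝ → ℝ) (u v : ℝ) : Prop where
  contDiffOn : ContDiffOn ℝ 1 h (Set.Icc u v)
  fix_left : h u = u
  fix_right : h v = v
  mono : StrictMonoOn h (Set.Icc u v)
  deriv_pos : ∀ w ∈ Set.Icc u v, 0 < derivWithin h (Set.Icc u v) w

/-- The `C¹` distance from a diffeomorphism of `[0,1]` to the identity. -/
noncomputable def distId (g : ℝ → ℝ) : ℝ :=
  (⨆ x : Set.Icc (0:ℝ) 1, |g x.1 - x.1|) +
    (⨆ x : Set.Icc (0:ℝ) 1, |derivWithin g (Set.Icc (0:ℝ) 1) x.1 - 1|)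

/-- `compN H k = H (k-1) ∘ ⋯ ∘ H 1 ∘ H 0`. -/
def compN (H : ℕ → ℝ → ℝ) : ℕ → ℝ → ℝ
  | 0 => id
  | (k + 1) => H k ∘ compN H k

/-- The Möbius map `x ↦ l x / (1 + (l-1) x)`, which fixes `0` and `1` and
multiplies the ratio `x/(1-x)` by `l`. -/
noncomputable def gmap (l : ℝ) (x : ℝ) : ℝ := l * x / (1 + (l - 1) * x)

lemma gd_pos {l x : ℝ} (hl : 0 < l) (hx0 : 0 ≤ x) (hx1 : x ≤ 1) :
    0 < 1 + (l - 1) * x := by nlinarith [mul_nonneg hx0 hl.le]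

lemma g_hasDerivAt {l x : ℝ} (hD : 1 + (l - 1) * x ≠ 0) :
    HasDerivAt (gmap l) (l / (1 + (l - 1) * x) ^ 2) x := by
  have h1 : HasDerivAt (fun x : ℝ => l * x) l x := by
    simpa using (hasDerivAt_id x).const_mul l
  have h2 : HasDerivAt (fun x : ℝ => 1 + (l - 1) * x) (l - 1) x := by
    simpa using ((hasDerivAt_id x).const_mul (l - 1)).const_add 1
  have h := h1.div h2 hD
  refine HasDerivAt.congr_deriv (f := gmap l) h ?_
  field_simp
  ring

lemma g_derivWithin {l : ℝ} (hl : 0 < l) {x : ℝ} (hx : x ∈ Icc (0:ℝ) 1) :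
    derivWithin (gmap l) (Icc (0:ℝ) 1) x = l / (1 + (l - 1) * x) ^ 2 :=
  ((g_hasDerivAt (gd_pos hl hx.1 hx.2).ne').hasDerivWithinAt).derivWithin
    (uniqueDiffOn_Icc one_pos x hx)

lemma g_diffeo {l : ℝ} (hl : 0 < l) : IsIntervalDiffeo (gmap l) 0 1 where
  contDiffOn := by
    apply ContDiffOn.div
    · exact (contDiff_const.mul contDiff_id).contDiffOn
    · exact (contDiff_const.add (contDiff_const.mul contDiff_id)).contDiffOn
    · exact fun x hx => (gd_pos hl hx.1 hx.2).ne'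
  fix_left := by simp [gmap]
  fix_right := by
    show l * 1 / (1 + (l - 1) * 1) = 1
    rw [show 1 + (l - 1) * 1 = l by ring]
    field_simp
  mono := by
    rintro a ⟨ha0, ha1⟩ b ⟨hb0, hb1⟩ hab
    have Da := gd_pos hl ha0 ha1
    have Db := gd_pos hl hb0 hb1
    show l * a / (1 + (l - 1) * a) < l * b / (1 + (l - 1) * b)
    rw [div_lt_div_iff₀ Da Db]
    nlinarith
  deriv_pos := by
    intro x hx
    rw [g_derivWithin hl hx]
    have := gd_pos hl hx.1 hx.2
    positivity

lemma g_mem_ratio {l : ℝ} (hl : 0 < l) {x : ℝ} (hx : x ∈ Ioo (0:ℝ) 1) :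
    gmap l x ∈ Ioo (0:ℝ) 1 ∧ gmap l x / (1 - gmap l x) = l * (x / (1 - x)) := by
  have hD := gd_pos hl hx.1.le hx.2.le
  have hD' : 1 + x * (l - 1) ≠ 0 := by nlinarith
  have hx1 : (0:ℝ) < 1 - x := by linarith [hx.2]
  have h1 : 1 - gmap l x = (1 - x) / (1 + (l - 1) * x) := by
    rw [gmap]; field_simp; ring
  have h2 : 0 < 1 - gmap l x := by rw [h1]; positivity
  refine ⟨⟨?_, by linarith⟩, ?_⟩
  · exact div_pos (mul_pos hl hx.1) hD
  · rw [h1, gmap]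
    field_simp

lemma ratio_inj {a b : ℝ} (ha : a ∈ Ioo (0:ℝ) 1) (hb : b ∈ Ioo (0:ℝ) 1)
    (h : a / (1 - a) = b / (1 - b)) : a = b := by
  have h1 : (1:ℝ) - a ≠ 0 := by intro hc; linarith [ha.2, (by linarith : a = 1)]
  have h2 : (1:ℝ) - b ≠ 0 := by intro hc; linarith [hb.2, (by linarith : b = 1)]
  field_simp at h
  nlinarith [h]

lemma g_distId {l : ℝ} (hd : |l - 1| ≤ 1/2) : distId (gmap l) ≤ 8 * |l - 1| := by
  have habs := abs_le.mp hd
  have hl : 0 < l := by linarith [habs.1]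
  haveI : Nonempty (Icc (0:ℝ) 1) := ⟨⟨0, by norm_num⟩⟩
  have hDhalf : ∀ x : ℝ, 0 ≤ x → x ≤ 1 → 1/2 ≤ 1 + (l - 1) * x := by
    intro x hx0 hx1
    nlinarith [mul_nonneg hx0 hx0]
  have hA : (⨆ x : Icc (0:ℝ) 1, |gmap l x.1 - x.1|) ≤ 2 * |l - 1| := by
    apply ciSup_le
    rintro ⟨x, hx0, hx1⟩
    have hD := gd_pos hl hx0 hx1
    have hD2 := hDhalf x hx0 hx1
    have hD' : 1 + x * (l - 1) ≠ 0 := by nlinarith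
    have key : gmap l x - x = (l - 1) * x * (1 - x) / (1 + (l - 1) * x) := by
      rw [gmap]; field_simp; ring
    rw [key, abs_div, abs_of_pos hD, div_le_iff₀ hD]
    have h1 : |(l - 1) * x * (1 - x)| = |l - 1| * (x * (1 - x)) := by
      rw [abs_mul, abs_mul, abs_of_nonneg hx0, abs_of_nonneg (by linarith : (0:ℝ) ≤ 1 - x)]
      ring
    rw [h1]
    nlinarith [abs_nonneg (l - 1),
      mul_nonneg (abs_nonneg (l - 1)) (by nlinarith : (0:ℝ) ≤ 1 - x * (1 - x)),
      mul_nonneg (abs_nonneg (l - 1)) (by linarith : (0:ℝ) ≤ 1 + (l - 1) * x - 1/2)]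
  have hB : (⨆ x : Icc (0:ℝ) 1, |derivWithin (gmap l) (Icc (0:ℝ) 1) x.1 - 1|)
      ≤ 6 * |l - 1| := by
    apply ciSup_le
    rintro ⟨x, hx0, hx1⟩
    have hD := gd_pos hl hx0 hx1
    have hD2 := hDhalf x hx0 hx1
    rw [g_derivWithin hl ⟨hx0, hx1⟩]
    have hDsq : (0:ℝ) < (1 + (l - 1) * x) ^ 2 := by positivity
    have key : l / (1 + (l - 1) * x) ^ 2 - 1
        = (l - (1 + (l - 1) * x) ^ 2) / (1 + (l - 1) * x) ^ 2 := by
      field_simp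
    rw [key, abs_div, abs_of_pos hDsq, div_le_iff₀ hDsq]
    have hnum : |l - (1 + (l - 1) * x) ^ 2| ≤ (3/2) * |l - 1| := by
      have e : l - (1 + (l - 1) * x) ^ 2 = (l - 1) * (1 - 2 * x) - (l - 1) ^ 2 * x ^ 2 := by
        ring
      rw [e]
      have b1 : |(l - 1) * (1 - 2 * x)| ≤ |l - 1| := by
        rw [abs_mul]
        have : |1 - 2 * x| ≤ 1 := abs_le.mpr ⟨by linarith, by linarith⟩
        nlinarith [abs_nonneg (l - 1)]
      have b2 : |(l - 1) ^ 2 * x ^ 2| ≤ (1/2) * |l - 1| := by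
        rw [abs_mul, abs_of_nonneg (sq_nonneg (l - 1)), abs_of_nonneg (sq_nonneg x),
          ← sq_abs (l - 1)]
        nlinarith [mul_nonneg (mul_nonneg (abs_nonneg (l - 1)) (abs_nonneg (l - 1)))
            (by nlinarith : (0:ℝ) ≤ 1 - x ^ 2),
          mul_nonneg (abs_nonneg (l - 1)) (by linarith : (0:ℝ) ≤ 1/2 - |l - 1|)]
      calc |(l - 1) * (1 - 2 * x) - (l - 1) ^ 2 * x ^ 2|
          ≤ |(l - 1) * (1 - 2 * x)| + |(l - 1) ^ 2 * x ^ 2| := abs_sub _ _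
        _ ≤ (3/2) * |l - 1| := by linarith
    have hDsq4 : (1:ℝ)/4 ≤ (1 + (l - 1) * x) ^ 2 := by nlinarith
    nlinarith [abs_nonneg (l - 1),
      mul_nonneg (abs_nonneg (l - 1)) (by linarith : (0:ℝ) ≤ (1 + (l - 1) * x) ^ 2 - 1/4)]
  unfold distId
  linarith

/-- **Lemma.** Let `(wᵢ)` be positive integers tending to infinity and `(μᵢ)` reals
greater than `1` tending to `1`. Let `t_{i,1}, t_{i,2} ∈ (0,1)` with
`t_{i,η}/(1 - t_{i,η}) ∈ [μᵢ^{-wᵢ}, μᵢ^{wᵢ}]`. Then for every `ε > 0` there is `i₀`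
such that for every `i ≥ i₀` there are `C¹` diffeomorphisms `H_{i,0}, …, H_{i,wᵢ-1}`
of `[0,1]`, each `ε`-`C¹`-close to the identity, with
`H_{i,wᵢ-1} ∘ ⋯ ∘ H_{i,0}(t_{i,1}) = t_{i,2}`. -/
theorem move_ratio_by_small_perturbations
    (w : ℕ → ℕ) (hwpos : ∀ i : ℕ, 0 < w i) (hw : Tendsto w atTop atTop)
    (μ : ℕ → ℝ) (hμ1 : ∀ i : ℕ, 1 < μ i) (hμ : Tendsto μ atTop (nhds 1))
    (t₁ t₂ : ℕ → ℝ) (ht₁ : ∀ i : ℕ, t₁ i ∈ Set.Ioo (0:ℝ) 1)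
    (ht₂ : ∀ i : ℕ, t₂ i ∈ Set.Ioo (0:ℝ) 1)
    (hr₁ : ∀ i : ℕ, t₁ i / (1 - t₁ i) ∈ Set.Icc (μ i ^ (-(w i : ℤ))) (μ i ^ (w i : ℤ)))
    (hr₂ : ∀ i : ℕ, t₂ i / (1 - t₂ i) ∈ Set.Icc (μ i ^ (-(w i : ℤ))) (μ i ^ (w i : ℤ)))
    (ε : ℝ) (hε : 0 < ε) :
    ∃ i₀ : ℕ, ∀ i : ℕ, i₀ ≤ i → ∃ H : ℕ → ℝ → ℝ,
      (∀ j < w i, IsIntervalDiffeo (H j) 0 1) ∧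
      (∀ j < w i, distId (H j) < ε) ∧
      compN H (w i) (t₁ i) = t₂ i := by
  set δ : ℝ := min (1/2) (ε/9) with hδdef
  have hδpos : 0 < δ := lt_min (by norm_num) (by linarith)
  have hδhalf : δ ≤ 1/2 := min_le_left _ _
  have hδε : δ ≤ ε/9 := min_le_right _ _
  have hμ2 : Tendsto (fun i => μ i ^ 2) atTop (nhds 1) := by
    have := hμ.mul hμ
    simpa [pow_two] using this
  have hev : ∀ᶠ i in atTop, μ i ^ 2 < 1 + δ :=
    hμ2.eventually_lt_const (by linarith)
  obtain ⟨i₀, hi₀⟩ := eventually_atTop.mp hev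
  refine ⟨i₀, fun i hi => ?_⟩
  -- notation
  have hμi := hμ1 i
  have hμpos : (0:ℝ) < μ i := by linarith
  have hwne : w i ≠ 0 := (hwpos i).ne'
  set R₁ : ℝ := t₁ i / (1 - t₁ i) with hR₁def
  set R₂ : ℝ := t₂ i / (1 - t₂ i) with hR₂def
  have hR₁pos : 0 < R₁ := div_pos (ht₁ i).1 (by linarith [(ht₁ i).2])
  have hR₂pos : 0 < R₂ := div_pos (ht₂ i).1 (by linarith [(ht₂ i).2])
  set P : ℝ := μ i ^ (w i) with hPdef
  have hPpos : 0 < P := pow_pos hμpos _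
  set M : ℝ := μ i ^ 2 with hMdef
  have hM1 : 1 < M := by nlinarith
  have hMδ : M < 1 + δ := hi₀ i hi
  have hzpow_pos : μ i ^ (-(w i : ℤ)) = P⁻¹ := by
    rw [zpow_neg, zpow_natCast]
  have hzpow : μ i ^ ((w i : ℤ)) = P := by rw [zpow_natCast]
  have hr₁u : R₁ ≤ P := by have := (hr₁ i).2; rwa [hzpow] at this
  have hr₁l : P⁻¹ ≤ R₁ := by have := (hr₁ i).1; rwa [hzpow_pos] at this
  have hr₂u : R₂ ≤ P := by have := (hr₂ i).2; rwa [hzpow] at this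
  have hr₂l : P⁻¹ ≤ R₂ := by have := (hr₂ i).1; rwa [hzpow_pos] at this
  have hPP : P * P = M ^ (w i) := by
    rw [hPdef, hMdef, ← pow_add, ← pow_mul, two_mul]
  have hMpos : 0 < M := by positivity
  have hMwpos : 0 < M ^ (w i) := pow_pos hMpos _
  -- the quotient of ratios
  have hQpos : 0 < R₂ / R₁ := div_pos hR₂pos hR₁pos
  have hQu : R₂ / R₁ ≤ M ^ (w i) := by
    have h := div_le_div₀ hPpos.le hr₂u (inv_pos.mpr hPpos) hr₁l
    calc R₂ / R₁ ≤ P / P⁻¹ := h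
      _ = P * P := by field_simp
      _ = M ^ (w i) := hPP
  have hQl : (M ^ (w i))⁻¹ ≤ R₂ / R₁ := by
    have h := div_le_div₀ hR₂pos.le hr₂l hR₁pos hr₁u
    calc (M ^ (w i))⁻¹ = (P * P)⁻¹ := by rw [hPP]
      _ = P⁻¹ / P := by rw [div_eq_mul_inv, ← mul_inv]
      _ ≤ R₂ / R₁ := h
  set l : ℝ := (R₂ / R₁) ^ ((w i : ℝ)⁻¹) with hldef
  have hlpos : 0 < l := Real.rpow_pos_of_pos hQpos _
  have hlpow : l ^ (w i) = R₂ / R₁ := Real.rpow_inv_natCast_pow hQpos.le hwne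
  have hinv_nonneg : (0:ℝ) ≤ ((w i : ℝ))⁻¹ := by positivity
  have hlle : l ≤ M := by
    calc l ≤ (M ^ (w i)) ^ ((w i : ℝ)⁻¹) :=
          Real.rpow_le_rpow hQpos.le hQu hinv_nonneg
      _ = M := Real.pow_rpow_inv_natCast hMpos.le hwne
  have hlge : M⁻¹ ≤ l := by
    have h1 : (M ^ (w i))⁻¹ = (M⁻¹) ^ (w i) := by rw [inv_pow]
    calc M⁻¹ = ((M⁻¹) ^ (w i)) ^ ((w i : ℝ)⁻¹) :=
          (Real.pow_rpow_inv_natCast (by positivity) hwne).symm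
      _ ≤ l := Real.rpow_le_rpow (by positivity) (h1 ▸ hQl) hinv_nonneg
  have hMM : M * M⁻¹ = 1 := mul_inv_cancel₀ hMpos.ne'
  have habs : |l - 1| ≤ M - 1 := by
    rw [abs_le]
    constructor
    · nlinarith [sq_nonneg (M - 1)]
    · linarith
  have hd_half : |l - 1| ≤ 1/2 := by linarith
  refine ⟨fun _ => gmap l, fun j _ => g_diffeo hlpos, fun j _ => ?_, ?_⟩
  · calc distId (gmap l) ≤ 8 * |l - 1| := g_distId hd_half
      _ ≤ 8 * (M - 1) := by linarith [abs_nonneg (l - 1)]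
      _ < 8 * δ := by linarith
      _ < ε := by linarith
  · have main : ∀ k, compN (fun _ => gmap l) k (t₁ i) ∈ Ioo (0:ℝ) 1 ∧
        compN (fun _ => gmap l) k (t₁ i) / (1 - compN (fun _ => gmap l) k (t₁ i))
          = l ^ k * R₁ := by
      intro k
      induction k with
      | zero => exact ⟨ht₁ i, by simp [compN, hR₁def]⟩
      | succ k ih =>
        have hstep := g_mem_ratio hlpos ih.1
        have heq : compN (fun _ => gmap l) (k + 1) (t₁ i)
            = gmap l (compN (fun _ => gmap l) k (t₁ i)) := rfl
        constructor
        · rw [heq]; exact hstep.1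
        · rw [heq, hstep.2, ih.2]; ring
    have hfin := (main (w i)).2
    rw [hlpow, div_mul_cancel₀ _ hR₁pos.ne'] at hfin
    exact ratio_inj (main (w i)).1 (ht₂ i) hfin
end

section
/- For every sufficiently small ε > 0, every t ∈ [−1,1] and every y ∈ (0,1), there exists a C¹ diffeomorphism φ of [0,1] that is equal to the identity in a neighborhood of 0 and of 1, is 2ε-C¹-close to the identity, and satisfies φ(y)/(1 − φ(y)) = (1 + tε) · y/(1 − y). -/
open Set Filter
namespace OneStepAux

noncomputable def m (u : ℝ) : ℝ := max 0 (min u 1)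

lemma m_nonneg (u : ℝ) : 0 ≤ m u := le_max_left _ _
lemma m_le_one (u : ℝ) : m u ≤ 1 := max_le zero_le_one (min_le_right _ _)
lemma abs_m_le (u : ℝ) : m u ≤ |u| :=
  max_le (abs_nonneg u) ((min_le_left u 1).trans (le_abs_self u))
lemma one_sub_m_le (u : ℝ) : 1 - m u ≤ |u - 1| := by
  rcases le_or_gt u 1 with h | h
  · have : min u 1 = u := min_eq_left h
    rw [m, this]
    have : u ≤ max 0 u := le_max_right _ _
    rw [abs_sub_comm, abs_of_nonneg (by linarith)]
    linarith
  · have : min u 1 = 1 := min_eq_right h.le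
    rw [m, this, max_eq_right zero_le_one]
    simp [abs_nonneg]

noncomputable def eta (u : ℝ) : ℝ := (m u)^2 * (3 - 2 * m u)
noncomputable def Dd (u : ℝ) : ℝ := 6 * m u * (1 - m u)

lemma m_of_nonpos {u : ℝ} (h : u ≤ 0) : m u = 0 := by
  rw [m, min_eq_left (h.trans zero_le_one), max_eq_left h]
lemma m_of_one_le {u : ℝ} (h : 1 ≤ u) : m u = 1 := by
  rw [m, min_eq_right h, max_eq_right zero_le_one]
lemma m_of_mem {u : ℝ} (h0 : 0 ≤ u) (h1 : u ≤ 1) : m u = u := by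
  rw [m, min_eq_left h1, max_eq_right h0]

lemma eta_of_nonpos {u : ℝ} (h : u ≤ 0) : eta u = 0 := by simp [eta, m_of_nonpos h]
lemma eta_of_one_le {u : ℝ} (h : 1 ≤ u) : eta u = 1 := by simp [eta, m_of_one_le h]; norm_num
lemma Dd_of_nonpos {u : ℝ} (h : u ≤ 0) : Dd u = 0 := by simp [Dd, m_of_nonpos h]
lemma Dd_of_one_le {u : ℝ} (h : 1 ≤ u) : Dd u = 0 := by simp [Dd, m_of_one_le h]

lemma eta_nonneg (u : ℝ) : 0 ≤ eta u := by
  have h1 := m_nonneg u; have h2 := m_le_one u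
  rw [eta]
  have : (0:ℝ) ≤ 3 - 2 * m u := by linarith
  positivity

lemma eta_le_one (u : ℝ) : eta u ≤ 1 := by
  have h1 := m_nonneg u; have h2 := m_le_one u
  rw [eta]
  nlinarith [sq_nonneg (1 - m u), sq_nonneg (m u)]

lemma abs_Dd_le (u : ℝ) : |Dd u| ≤ 3/2 := by
  have h1 := m_nonneg u; have h2 := m_le_one u
  rw [abs_le, Dd]
  constructor <;> nlinarith [sq_nonneg (2 * m u - 1)]

lemma continuous_m : Continuous m := continuous_const.max (continuous_id.min continuous_const)
lemma continuous_eta : Continuous eta :=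
  (continuous_m.pow 2).mul (continuous_const.sub (continuous_const.mul continuous_m))
lemma continuous_Dd : Continuous Dd :=
  ((continuous_const.mul continuous_m)).mul (continuous_const.sub continuous_m)

lemma abs_eta_le (u : ℝ) : |eta u| ≤ 3 * (|u| * |u|) := by
  have h1 := m_nonneg u; have h2 := m_le_one u; have h3 := abs_m_le u
  rw [abs_of_nonneg (eta_nonneg u), eta]
  nlinarith [abs_nonneg u, sq_nonneg (m u)]

lemma abs_eta_sub_one_le (u : ℝ) : |eta u - 1| ≤ 3 * (|u - 1| * |u - 1|) := by
  have h1 := m_nonneg u; have h2 := m_le_one u; have h3 := one_sub_m_le u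
  have h4 : eta u - 1 = -((1 - m u)^2 * (1 + 2 * m u)) := by rw [eta]; ring
  rw [h4, abs_neg, abs_of_nonneg (by nlinarith [sq_nonneg (1 - m u)])]
  nlinarith [abs_nonneg (u - 1), sq_nonneg (1 - m u)]

lemma sq_isLittleO : (fun x : ℝ => x * x) =o[nhds (0:ℝ)] fun x => x := by
  have ha : (fun x : ℝ => x) =o[nhds (0:ℝ)] fun _ => (1:ℝ) :=
    Asymptotics.isLittleO_one_iff ℝ |>.2 (by exact Filter.tendsto_id)
  simpa using ha.mul_isBigO (Asymptotics.isBigO_refl (fun x : ℝ => x) _)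

lemma hasDerivAt_eta (u : ℝ) : HasDerivAt eta (Dd u) u := by
  rcases lt_trichotomy u 0 with h | rfl | h
  · rw [Dd_of_nonpos h.le]
    refine (hasDerivAt_const u (0:ℝ)).congr_of_eventuallyEq ?_
    filter_upwards [Iio_mem_nhds h] with x hx
    exact eta_of_nonpos hx.le
  · have hD : Dd 0 = 0 := Dd_of_nonpos le_rfl
    rw [hD, hasDerivAt_iff_isLittleO]
    have h0 : eta 0 = 0 := eta_of_nonpos le_rfl
    simp only [h0, sub_zero, smul_zero]
    have h1 : (fun x : ℝ => eta x) =O[nhds (0:ℝ)] fun x => x * x :=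
      Asymptotics.IsBigO.of_bound 3 (Filter.Eventually.of_forall fun x => by
        simpa [abs_mul] using abs_eta_le x)
    exact h1.trans_isLittleO sq_isLittleO
  rcases lt_trichotomy u 1 with h1 | rfl | h1
  · have hp : HasDerivAt (fun x : ℝ => x^2 * (3 - 2*x)) (6*u*(1-u)) u := by
      have hh : HasDerivAt (fun x : ℝ => x^2 * (3 - 2*x))
          ((2:ℕ) * u^1 * (3 - 2*u) + u^2 * (0 - 2*1)) u :=
        (hasDerivAt_pow 2 u).mul ((hasDerivAt_const u 3).sub ((hasDerivAt_id u).const_mul 2))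
      convert hh using 1; push_cast; ring
    have hD : Dd u = 6*u*(1-u) := by rw [Dd, m_of_mem h.le h1.le]
    rw [hD]
    refine hp.congr_of_eventuallyEq ?_
    filter_upwards [Ioo_mem_nhds h h1] with x hx
    rw [eta, m_of_mem hx.1.le hx.2.le]
  · have hD : Dd 1 = 0 := Dd_of_one_le le_rfl
    rw [hD, hasDerivAt_iff_isLittleO]
    have h0 : eta 1 = 1 := eta_of_one_le le_rfl
    simp only [h0, smul_zero, sub_zero]
    have hbig : (fun x : ℝ => eta x - 1) =O[nhds (1:ℝ)] fun x => (x-1) * (x-1) :=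
      Asymptotics.IsBigO.of_bound 3 (Filter.Eventually.of_forall fun x => by
        simpa [abs_mul] using abs_eta_sub_one_le x)
    have htd : Filter.Tendsto (fun x : ℝ => x - 1) (nhds 1) (nhds (1 - 1)) :=
      Filter.Tendsto.sub_const Filter.tendsto_id 1
    rw [sub_self] at htd
    exact hbig.trans_isLittleO (sq_isLittleO.comp_tendsto htd)
  · rw [Dd_of_one_le h1.le]
    refine (hasDerivAt_const u (1:ℝ)).congr_of_eventuallyEq ?_
    filter_upwards [Ioi_mem_nhds h1] with x hx
    exact eta_of_one_le hx.le

end OneStepAux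

open OneStepAux in
set_option maxHeartbeats 2000000 in
/-- **Lemma.** For every sufficiently small `ε > 0`, every `t ∈ [-1,1]` and every
`y ∈ (0,1)`, there is a `C¹` diffeomorphism `φ` of `[0,1]`, equal to the identity in a
neighborhood of `0` and of `1`, which is `2ε`-`C¹`-close to the identity, and satisfies
`φ(y)/(1 - φ(y)) = (1 + tε) · y/(1 - y)`. -/
theorem one_step_ratio_perturbation :
    ∃ ε₀ : ℝ, 0 < ε₀ ∧ ∀ ε : ℝ, 0 < ε → ε < ε₀ →
      ∀ t ∈ Set.Icc (-1 : ℝ) 1, ∀ y ∈ Set.Ioo (0:ℝ) 1,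
        ∃ φ : ℝ → ℝ, IsIntervalDiffeo φ 0 1 ∧
          (∃ δ : ℝ, 0 < δ ∧ (∀ z ∈ Set.Icc (0:ℝ) δ, φ z = z) ∧
            (∀ z ∈ Set.Icc (1 - δ) 1, φ z = z)) ∧
          distId φ < 2 * ε ∧
          φ y / (1 - φ y) = (1 + t * ε) * (y / (1 - y)) := by
  refine ⟨1/24, by norm_num, ?_⟩
  intro ε hε hε' t ht y hy
  obtain ⟨ht1, ht2⟩ := ht
  obtain ⟨hy0, hy1⟩ := hy
  have h1y : (0:ℝ) < 1 - y := by linarith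
  set d : ℝ := 1 + t * ε * y with hd_def
  have hkey : -ε ≤ t * ε * y := by
    nlinarith [mul_le_mul_of_nonneg_right ht1 (mul_pos hε hy0).le,
      mul_le_of_le_one_right hε.le hy1.le]
  have hd : 1 - ε ≤ d := by rw [hd_def]; linarith
  have hd0 : (0:ℝ) < d := by rw [hd_def]; linarith
  set s : ℝ := t * ε * y * (1 - y) / d with hs_def
  set L : ℝ := (9/10) * y with hL_def
  set R : ℝ := (9/10) * (1 - y) with hR_def
  have hL : 0 < L := by rw [hL_def]; linarith
  have hR : 0 < R := by rw [hR_def]; linarith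
  set a : ℝ := y - L with ha_def
  set b : ℝ := y + R with hb_def
  set φ : ℝ → ℝ := fun z => z + s * (eta ((z - a)/L) * eta ((b - z)/R)) with hφ_def
  set Φ : ℝ → ℝ := fun z => 1 + s * (Dd ((z - a)/L) * (1/L) * eta ((b - z)/R) +
      eta ((z - a)/L) * (Dd ((b - z)/R) * (-(1/R)))) with hΦ_def
  clear_value d s L R a b φ Φ
  -- |s| bound
  have habs_s : |s| ≤ ε * y * (1 - y) / d := by
    rw [hs_def, abs_div, abs_of_pos hd0]
    gcongr
    have : |t * ε * y * (1 - y)| = |t| * (ε * y * (1 - y)) := by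
      rw [abs_mul, abs_mul, abs_mul, abs_of_pos hε, abs_of_pos hy0, abs_of_pos h1y]; ring
    rw [this]
    nlinarith [mul_le_mul_of_nonneg_right (abs_le.2 ⟨ht1, ht2⟩ : |t| ≤ 1)
      (mul_nonneg (mul_nonneg hε.le hy0.le) h1y.le)]
  -- derivative
  have hderiv : ∀ z, HasDerivAt φ (Φ z) z := by
    intro z
    have h1 : HasDerivAt (fun z : ℝ => (z - a)/L) (1/L) z := by
      simpa using ((hasDerivAt_id z).sub_const a).div_const L
    have h2 : HasDerivAt (fun z : ℝ => (b - z)/R) (-(1/R)) z := by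
      have := ((hasDerivAt_id z).const_sub b).div_const R
      exact this.congr_deriv (by ring)
    have hA : HasDerivAt (fun z : ℝ => eta ((z - a)/L)) (Dd ((z - a)/L) * (1/L)) z :=
      (hasDerivAt_eta ((z - a)/L)).comp (h := fun z : ℝ => (z - a)/L) z h1
    have hB : HasDerivAt (fun z : ℝ => eta ((b - z)/R)) (Dd ((b - z)/R) * (-(1/R))) z :=
      (hasDerivAt_eta ((b - z)/R)).comp (h := fun z : ℝ => (b - z)/R) z h2
    have hφ' := (hasDerivAt_id z).add ((hA.mul hB).const_mul s)
    rw [hφ_def, hΦ_def]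
    exact hφ'
  -- bound on |Φ z - 1|
  have hΦ_bound : ∀ z, |Φ z - 1| ≤ (5/3) * ε / d := by
    intro z
    have e1 := eta_nonneg ((z - a)/L); have e1' := eta_le_one ((z - a)/L)
    have e2 := eta_nonneg ((b - z)/R); have e2' := eta_le_one ((b - z)/R)
    have d1 := abs_Dd_le ((z - a)/L); have d2 := abs_Dd_le ((b - z)/R)
    have hd1 := abs_nonneg (Dd ((z - a)/L)); have hd2 := abs_nonneg (Dd ((b - z)/R))
    have hstep : |Φ z - 1| ≤ |s| * ((3/2) * (1/L) + (3/2) * (1/R)) := by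
      have h0 : Φ z - 1 = s * (Dd ((z - a)/L) * (1/L) * eta ((b - z)/R) +
          eta ((z - a)/L) * (Dd ((b - z)/R) * (-(1/R)))) := by simp only [hΦ_def]; ring
      rw [h0, abs_mul]
      gcongr |s| * ?_
      calc |Dd ((z - a)/L) * (1/L) * eta ((b - z)/R) +
              eta ((z - a)/L) * (Dd ((b - z)/R) * (-(1/R)))|
          ≤ |Dd ((z - a)/L) * (1/L) * eta ((b - z)/R)| +
              |eta ((z - a)/L) * (Dd ((b - z)/R) * (-(1/R)))| := abs_add_le _ _
        _ ≤ (3/2) * (1/L) + (3/2) * (1/R) := by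
            rw [abs_mul, abs_mul, abs_mul, abs_mul, abs_neg]
            have hL' : (0:ℝ) < 1/L := one_div_pos.mpr hL
            have hR' : (0:ℝ) < 1/R := one_div_pos.mpr hR
            rw [abs_of_pos hL', abs_of_pos hR', abs_of_nonneg e1, abs_of_nonneg e2]
            nlinarith [mul_le_mul_of_nonneg_right
                (mul_le_mul d1 e2' e2 (by norm_num : (0:ℝ) ≤ 3/2)) hL'.le,
              mul_le_mul_of_nonneg_right
                (mul_le_mul d2 e1' e1 (by norm_num : (0:ℝ) ≤ 3/2)) hR'.le]
    refine hstep.trans ?_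
    have hsum : (3/2) * (1/L) + (3/2) * (1/R) = (5/3) / (y * (1 - y)) := by
      rw [hL_def, hR_def]
      field_simp
      ring
    rw [hsum]
    have hP : (0:ℝ) < y * (1 - y) := mul_pos hy0 h1y
    calc |s| * ((5/3) / (y * (1 - y)))
        ≤ (ε * y * (1 - y) / d) * ((5/3) / (y * (1 - y))) := by gcongr
      _ = (5/3) * ε / d := by field_simp
  have hΦ_pos : ∀ z, 0 < Φ z := by
    intro z
    have h1 := hΦ_bound z
    have h2 := abs_le.1 h1
    have h3 : (5/3) * ε / d < 1 := by
      rw [div_lt_one hd0]; linarith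
    linarith [h2.1]
  have hmemderiv : ∀ x ∈ Icc (0:ℝ) 1, derivWithin φ (Icc (0:ℝ) 1) x = Φ x := by
    intro x hx
    rw [(hderiv x).differentiableAt.derivWithin ((uniqueDiffOn_Icc one_pos) x hx)]
    exact (hderiv x).deriv
  have hΦcont : Continuous Φ := by
    rw [hΦ_def]
    have c1 : Continuous fun z : ℝ => (z - a)/L := (continuous_id.sub continuous_const).div_const L
    have c2 : Continuous fun z : ℝ => (b - z)/R := (continuous_const.sub continuous_id).div_const R
    exact continuous_const.add (continuous_const.mul
      ((((continuous_Dd.comp c1).mul continuous_const).mul (continuous_eta.comp c2)).add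
        ((continuous_eta.comp c1).mul ((continuous_Dd.comp c2).mul continuous_const))))
  have hcd : ContDiff ℝ 1 φ := by
    rw [contDiff_one_iff_deriv]
    refine ⟨fun x => (hderiv x).differentiableAt, ?_⟩
    have : deriv φ = Φ := funext fun x => (hderiv x).deriv
    rw [this]; exact hΦcont
  refine ⟨φ, ⟨hcd.contDiffOn, ?_, ?_, ?_, ?_⟩, ?_, ?_, ?_⟩
  · -- φ 0 = 0
    have h0 : ((0:ℝ) - a)/L ≤ 0 := by
      apply div_nonpos_of_nonpos_of_nonneg _ hL.le
      rw [ha_def, hL_def]; linarith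
    have he : eta ((0 - a)/L) = 0 := eta_of_nonpos h0
    rw [hφ_def]
    simp only [he, zero_mul, mul_zero, add_zero]
  · -- φ 1 = 1
    have h0 : (b - 1)/R ≤ 0 := by
      apply div_nonpos_of_nonpos_of_nonneg _ hR.le
      rw [hb_def, hR_def]; linarith
    have he : eta ((b - 1)/R) = 0 := eta_of_nonpos h0
    rw [hφ_def]
    simp only [he, zero_mul, mul_zero, add_zero]
  · -- strict mono
    exact strictMonoOn_of_deriv_pos (convex_Icc 0 1) hcd.continuous.continuousOn
      (fun x _ => by rw [(hderiv x).deriv]; exact hΦ_pos x)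
  · -- deriv pos
    intro w hw
    rw [hmemderiv w hw]; exact hΦ_pos w
  · -- identity near 0 and 1
    refine ⟨min (y/10) ((1 - y)/10), lt_min (by linarith) (by linarith), ?_, ?_⟩
    · intro z hz
      have hza : z ≤ a := by
        have := hz.2.trans (min_le_left _ _)
        rw [ha_def, hL_def]; linarith
      have h0 : (z - a)/L ≤ 0 := div_nonpos_of_nonpos_of_nonneg (by linarith) hL.le
      have he : eta ((z - a)/L) = 0 := eta_of_nonpos h0
      rw [hφ_def]
      simp only [he, zero_mul, mul_zero, add_zero]
    · intro z hz
      have hzb : b ≤ z := by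
        have h1 : 1 - min (y/10) ((1-y)/10) ≤ z := hz.1
        have h2 : min (y/10) ((1-y)/10) ≤ (1-y)/10 := min_le_right _ _
        rw [hb_def, hR_def]; linarith
      have h0 : (b - z)/R ≤ 0 := div_nonpos_of_nonpos_of_nonneg (by linarith) hR.le
      have he : eta ((b - z)/R) = 0 := eta_of_nonpos h0
      rw [hφ_def]
      simp only [he, zero_mul, mul_zero, add_zero]
  · -- distId < 2ε
    haveI : Nonempty (Set.Icc (0:ℝ) 1) := ⟨⟨0, by norm_num⟩⟩
    have hb1 : (⨆ x : Set.Icc (0:ℝ) 1, |φ x.1 - x.1|) ≤ ε * y * (1 - y) / d := by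
      apply ciSup_le
      intro x
      have hval : φ x.1 - x.1 = s * (eta ((x.1 - a)/L) * eta ((b - x.1)/R)) := by
        simp only [hφ_def]; ring
      rw [hval, abs_mul]
      have e1 := eta_nonneg ((x.1 - a)/L); have e1' := eta_le_one ((x.1 - a)/L)
      have e2 := eta_nonneg ((b - x.1)/R); have e2' := eta_le_one ((b - x.1)/R)
      have : |eta ((x.1 - a)/L) * eta ((b - x.1)/R)| ≤ 1 := by
        rw [abs_mul, abs_of_nonneg e1, abs_of_nonneg e2]; nlinarith
      nlinarith [abs_nonneg s]
    have hb2 : (⨆ x : Set.Icc (0:ℝ) 1, |derivWithin φ (Set.Icc (0:ℝ) 1) x.1 - 1|)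
        ≤ (5/3) * ε / d := by
      apply ciSup_le
      intro x
      rw [hmemderiv x.1 x.2]
      exact hΦ_bound x.1
    have hfin : ε * y * (1 - y) / d + (5/3) * ε / d < 2 * ε := by
      rw [← add_div, div_lt_iff₀ hd0]
      rw [hd_def]
      nlinarith [mul_nonneg hε.le (sq_nonneg (y - 1/2)),
        mul_lt_mul_of_pos_left hε' hε, mul_le_mul_of_nonneg_right hkey (by linarith : (0:ℝ) ≤ 2*ε)]
    calc distId φ ≤ ε * y * (1 - y) / d + (5/3) * ε / d := add_le_add hb1 hb2
      _ < 2 * ε := hfin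
  · -- ratio
    have hyy : φ y = y * (1 + t * ε) / d := by
      have hu1 : (1:ℝ) ≤ (y - a)/L := by
        rw [ha_def, le_div_iff₀ hL]; linarith
      have hu2 : (1:ℝ) ≤ (b - y)/R := by
        rw [hb_def, le_div_iff₀ hR]; linarith
      rw [hφ_def]
      simp only [eta_of_one_le hu1, eta_of_one_le hu2, mul_one]
      rw [hs_def]
      field_simp [hd0.ne']
      rw [hd_def]
      ring
    have h1φy : 1 - φ y = (1 - y) / d := by
      rw [hyy]
      field_simp [hd0.ne']
      rw [hd_def]
      ring
    rw [h1φy, hyy]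
    field_simp [hd0.ne', h1y.ne']
end
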